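/- arXiv:1109.6663 — 7 statements merged into one kernel-verified Lean document; each statement's English description precedes it below -/
import Mathlib

section
/- Let f be a holomorphic function on the open unit disk 𝔻 ⊂ ℂ whose derivative is non-vanishing on 𝔻, and suppose that (1 − |z|²)² · |S f(z)| ≤ 2 for every z ∈ 𝔻, where S f is the Schwarzian derivative of f. Then f is injective on 𝔻. (This is the 'contains the ball of radius 2' half of the Nehari-type theorem used in the paper, expressed analytically via the Schwarzian derivative.) -/
open Set Metric Complex

/-- The Schwarzian derivative of a holomorphic function `f`:
`S f(z) = f'''(z)/f'(z) - (3/2) (f''(z)/f'(z))^2`. -/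
noncomputable def schwarzian (f : ℂ → ℂ) (z : ℂ) : ℂ :=
  iteratedDeriv 3 f z / deriv f z - (3 / 2) * (iteratedDeriv 2 f z / deriv f z) ^ 2


lemma deriv_eq_on {s : Set ℂ} (hs : IsOpen s) {F F1 : ℂ → ℂ}
    (h1 : ∀ z ∈ s, HasDerivAt F (F1 z) z) {z : ℂ} (hz : z ∈ s) :
    deriv F z = F1 z := (h1 z hz).deriv

lemma deriv2_eq_on {s : Set ℂ} (hs : IsOpen s) {F F1 F2 : ℂ → ℂ}
    (h1 : ∀ z ∈ s, HasDerivAt F (F1 z) z) (h2 : ∀ z ∈ s, HasDerivAt F1 (F2 z) z)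
    {z : ℂ} (hz : z ∈ s) : deriv (deriv F) z = F2 z := by
  have he : deriv F =ᶠ[nhds z] F1 :=
    Filter.eventuallyEq_of_mem (hs.mem_nhds hz) (fun w hw => (h1 w hw).deriv)
  rw [he.deriv_eq]; exact (h2 z hz).deriv

lemma deriv3_eq_on {s : Set ℂ} (hs : IsOpen s) {F F1 F2 F3 : ℂ → ℂ}
    (h1 : ∀ z ∈ s, HasDerivAt F (F1 z) z) (h2 : ∀ z ∈ s, HasDerivAt F1 (F2 z) z)
    (h3 : ∀ z ∈ s, HasDerivAt F2 (F3 z) z)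
    {z : ℂ} (hz : z ∈ s) : deriv (deriv (deriv F)) z = F3 z := by
  have he : deriv (deriv F) =ᶠ[nhds z] F2 :=
    Filter.eventuallyEq_of_mem (hs.mem_nhds hz) (fun w hw => deriv2_eq_on hs h1 h2 hw)
  rw [he.deriv_eq]; exact (h3 z hz).deriv

lemma schwarzian_eq_on {s : Set ℂ} (hs : IsOpen s) {F F1 F2 F3 : ℂ → ℂ}
    (h1 : ∀ z ∈ s, HasDerivAt F (F1 z) z) (h2 : ∀ z ∈ s, HasDerivAt F1 (F2 z) z)
    (h3 : ∀ z ∈ s, HasDerivAt F2 (F3 z) z)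
    {z : ℂ} (hz : z ∈ s) :
    schwarzian F z = F3 z / F1 z - (3 / 2) * (F2 z / F1 z) ^ 2 := by
  unfold schwarzian
  rw [show (3 : ℕ) = 2 + 1 from rfl, iteratedDeriv_succ,
    iteratedDeriv_succ, iteratedDeriv_one,
    deriv_eq_on hs h1 hz, deriv2_eq_on hs h1 h2 hz, deriv3_eq_on hs h1 h2 h3 hz]


section Moebius
variable {a e : ℂ}

noncomputable def moeb (a e z : ℂ) : ℂ := (a - e * z) / (1 - (starRingEnd ℂ a * e) * z)
noncomputable def moeb1 (a e z : ℂ) : ℂ := e * (a * starRingEnd ℂ a - 1) / (1 - (starRingEnd ℂ a * e) * z) ^ 2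
noncomputable def moeb2 (a e z : ℂ) : ℂ :=
  2 * (starRingEnd ℂ a * e) * (e * (a * starRingEnd ℂ a - 1)) / (1 - (starRingEnd ℂ a * e) * z) ^ 3
noncomputable def moeb3 (a e z : ℂ) : ℂ :=
  6 * (starRingEnd ℂ a * e) ^ 2 * (e * (a * starRingEnd ℂ a - 1)) / (1 - (starRingEnd ℂ a * e) * z) ^ 4

lemma moeb_den_ne (ha : ‖a‖ < 1) (he : ‖e‖ = 1) {z : ℂ} (hz : z ∈ ball (0 : ℂ) 1) : (1 : ℂ) - (starRingEnd ℂ a * e) * z ≠ 0 := by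
  have hz' : ‖z‖ < 1 := by simpa using hz
  have : ‖(starRingEnd ℂ a * e) * z‖ < 1 := by
    rw [norm_mul, norm_mul, Complex.norm_conj, he]
    nlinarith [norm_nonneg a, norm_nonneg z]
  intro h
  rw [sub_eq_zero] at h
  rw [← h] at this
  simp at this

lemma moeb_hasDerivAt (ha : ‖a‖ < 1) (he : ‖e‖ = 1) {z : ℂ} (hz : z ∈ ball (0 : ℂ) 1) :
    HasDerivAt (moeb a e) (moeb1 a e z) z := by
  have hd := moeb_den_ne ha he hz
  have h1 : HasDerivAt (fun w => a - e * w) (-e) z := by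
    exact ((hasDerivAt_const z a).sub ((hasDerivAt_id z).const_mul e)).congr_deriv (by ring)
  have h2 : HasDerivAt (fun w => (1 : ℂ) - (starRingEnd ℂ a * e) * w) (-(starRingEnd ℂ a * e)) z := by
    exact ((hasDerivAt_const z (1:ℂ)).sub ((hasDerivAt_id z).const_mul (starRingEnd ℂ a * e))).congr_deriv (by ring)
  have := h1.div h2 hd
  refine this.congr_deriv (Eq.symm ?_)
  unfold moeb1
  field_simp
  ring

lemma moeb1_hasDerivAt (ha : ‖a‖ < 1) (he : ‖e‖ = 1) {z : ℂ} (hz : z ∈ ball (0 : ℂ) 1) :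
    HasDerivAt (moeb1 a e) (moeb2 a e z) z := by
  have hd := moeb_den_ne ha he hz
  have h2 : HasDerivAt (fun w => (1 : ℂ) - (starRingEnd ℂ a * e) * w) (-(starRingEnd ℂ a * e)) z := by
    exact ((hasDerivAt_const z (1:ℂ)).sub ((hasDerivAt_id z).const_mul (starRingEnd ℂ a * e))).congr_deriv (by ring)
  have hpow : HasDerivAt (fun w => ((1 : ℂ) - (starRingEnd ℂ a * e) * w) ^ 2)
      (2 * ((1 : ℂ) - (starRingEnd ℂ a * e) * z) ^ 1 * (-(starRingEnd ℂ a * e))) z := h2.pow 2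
  have := (hasDerivAt_const z (e * (a * starRingEnd ℂ a - 1))).div hpow (pow_ne_zero 2 hd)
  refine this.congr_deriv (Eq.symm ?_)
  unfold moeb2
  field_simp
  ring

lemma moeb2_hasDerivAt (ha : ‖a‖ < 1) (he : ‖e‖ = 1) {z : ℂ} (hz : z ∈ ball (0 : ℂ) 1) :
    HasDerivAt (moeb2 a e) (moeb3 a e z) z := by
  have hd := moeb_den_ne ha he hz
  have h2 : HasDerivAt (fun w => (1 : ℂ) - (starRingEnd ℂ a * e) * w) (-(starRingEnd ℂ a * e)) z := by
    exact ((hasDerivAt_const z (1:ℂ)).sub ((hasDerivAt_id z).const_mul (starRingEnd ℂ a * e))).congr_deriv (by ring)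
  have hpow : HasDerivAt (fun w => ((1 : ℂ) - (starRingEnd ℂ a * e) * w) ^ 3)
      (3 * ((1 : ℂ) - (starRingEnd ℂ a * e) * z) ^ 2 * (-(starRingEnd ℂ a * e))) z := h2.pow 3
  have := (hasDerivAt_const z
      (2 * (starRingEnd ℂ a * e) * (e * (a * starRingEnd ℂ a - 1)))).div hpow (pow_ne_zero 3 hd)
  refine this.congr_deriv (Eq.symm ?_)
  unfold moeb3
  field_simp
  ring

lemma moeb_normSq_identity (he : ‖e‖ = 1) {z : ℂ} (hz : z ∈ ball (0 : ℂ) 1) :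
    normSq ((1 : ℂ) - (starRingEnd ℂ a * e) * z) - normSq (a - e * z)
      = (1 - normSq a) * (1 - normSq z) := by
  have he' : e * starRingEnd ℂ e = 1 := by
    rw [Complex.mul_conj]; rw [← Complex.sq_norm, he]; norm_num
  have key : ((1 : ℂ) - (starRingEnd ℂ a * e) * z) * starRingEnd ℂ ((1 : ℂ) - (starRingEnd ℂ a * e) * z)
      - (a - e * z) * starRingEnd ℂ (a - e * z)
      = (1 - a * starRingEnd ℂ a) * (1 - z * starRingEnd ℂ z) := by
    simp only [map_sub, map_mul, map_one, Complex.conj_conj]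
    linear_combination (z * starRingEnd ℂ z * (a * starRingEnd ℂ a - 1)) * he'
  rw [Complex.mul_conj, Complex.mul_conj, Complex.mul_conj, Complex.mul_conj] at key
  have := key
  push_cast at this
  exact_mod_cast congrArg Complex.re this

lemma moeb_one_sub_sq (ha : ‖a‖ < 1) (he : ‖e‖ = 1) {z : ℂ}
    (hz : z ∈ ball (0 : ℂ) 1) :
    1 - ‖moeb a e z‖ ^ 2
      = (1 - normSq a) * (1 - normSq z) / normSq (1 - (starRingEnd ℂ a * e) * z) := by
  have hd := moeb_den_ne ha he hz
  have hd' : normSq (1 - (starRingEnd ℂ a * e) * z) ≠ 0 := by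
    simpa [Complex.normSq_eq_zero] using hd
  have h1 : ‖moeb a e z‖ ^ 2
      = normSq (a - e * z) / normSq (1 - (starRingEnd ℂ a * e) * z) := by
    rw [Complex.sq_norm]
    unfold moeb
    rw [Complex.normSq_div]
  rw [h1, ← moeb_normSq_identity he hz]
  rw [one_sub_div hd']

lemma moeb_mem_ball (ha : ‖a‖ < 1) (he : ‖e‖ = 1) {z : ℂ}
    (hz : z ∈ ball (0 : ℂ) 1) : moeb a e z ∈ ball (0 : ℂ) 1 := by
  have hz' : ‖z‖ < 1 := by simpa using hz
  have h1 : 0 < 1 - ‖moeb a e z‖ ^ 2 := by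
    rw [moeb_one_sub_sq ha he hz]
    have hna : normSq a < 1 := by rw [← Complex.sq_norm]; nlinarith [norm_nonneg a]
    have hnz : normSq z < 1 := by rw [← Complex.sq_norm]; nlinarith [norm_nonneg z]
    have hd' : 0 < normSq (1 - (starRingEnd ℂ a * e) * z) := by
      have := moeb_den_ne ha he hz
      exact Complex.normSq_pos.2 this
    exact div_pos (mul_pos (by linarith) (by linarith)) hd'
  simp only [mem_ball, dist_zero_right]
  nlinarith [norm_nonneg (moeb a e z)]

lemma moeb1_abs (ha : ‖a‖ < 1) (he : ‖e‖ = 1) {z : ℂ}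
    (hz : z ∈ ball (0 : ℂ) 1) :
    ‖moeb1 a e z‖ = (1 - normSq a) / normSq (1 - (starRingEnd ℂ a * e) * z) := by
  have hna : normSq a < 1 := by rw [← Complex.sq_norm]; nlinarith [norm_nonneg a]
  unfold moeb1
  rw [norm_div, norm_mul, he, one_mul, norm_pow, ← Complex.normSq_eq_norm_sq]
  congr 1
  rw [Complex.mul_conj]
  rw [show ((normSq a : ℂ) - 1) = ((normSq a - 1 : ℝ) : ℂ) by push_cast; ring]
  rw [Complex.norm_real, Real.norm_eq_abs]
  rw [abs_of_nonpos (by linarith)]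
  ring

lemma moeb1_ne_zero (ha : ‖a‖ < 1) (he : ‖e‖ = 1) {z : ℂ}
    (hz : z ∈ ball (0 : ℂ) 1) : moeb1 a e z ≠ 0 := by
  have hna : normSq a < 1 := by rw [← Complex.sq_norm]; nlinarith [norm_nonneg a]
  have hd' : 0 < normSq (1 - (starRingEnd ℂ a * e) * z) :=
    Complex.normSq_pos.2 (moeb_den_ne ha he hz)
  intro h
  have h2 := moeb1_abs ha he hz
  rw [h] at h2
  simp only [norm_zero] at h2
  have hpos : 0 < (1 - normSq a) / normSq (1 - (starRingEnd ℂ a * e) * z) :=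
    div_pos (by linarith) hd'
  linarith

lemma moeb_key (ha : ‖a‖ < 1) (he : ‖e‖ = 1) {z : ℂ}
    (hz : z ∈ ball (0 : ℂ) 1) :
    1 - ‖moeb a e z‖ ^ 2 = ‖moeb1 a e z‖ * (1 - ‖z‖ ^ 2) := by
  rw [moeb_one_sub_sq ha he hz, moeb1_abs ha he hz, Complex.sq_norm]
  ring

lemma moeb_zero : moeb a e 0 = a := by unfold moeb; simp

lemma moeb_val (ha : ‖a‖ < 1) {b : ℂ} (hb : ‖b‖ < 1) (he : ‖e‖ = 1)
    {r : ℝ} (hr : e * r = (a - b) / (1 - starRingEnd ℂ a * b)) :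
    moeb a e r = b := by
  have hd : (1 : ℂ) - starRingEnd ℂ a * b ≠ 0 := by
    intro h
    rw [sub_eq_zero] at h
    have : ‖(starRingEnd ℂ a) * b‖ < 1 := by
      rw [norm_mul, Complex.norm_conj]; nlinarith [norm_nonneg a, norm_nonneg b]
    rw [← h] at this; simp at this
  have hna : normSq a < 1 := by rw [← Complex.sq_norm]; nlinarith [norm_nonneg a]
  have hA : (1 : ℂ) - starRingEnd ℂ a * a ≠ 0 := by
    have hcm : starRingEnd ℂ a * a = (normSq a : ℂ) := by rw [mul_comm, Complex.mul_conj]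
    rw [hcm, show (1 : ℂ) - (normSq a : ℂ) = ((1 - normSq a : ℝ) : ℂ) by push_cast; ring]
    exact_mod_cast Complex.ofReal_ne_zero.2 (by linarith)
  unfold moeb
  rw [mul_assoc, hr]
  have e2 : (1 : ℂ) - starRingEnd ℂ a * ((a - b) / (1 - starRingEnd ℂ a * b))
      = (1 - starRingEnd ℂ a * a) / (1 - starRingEnd ℂ a * b) := by
    field_simp
    ring
  have hden : (1 : ℂ) - starRingEnd ℂ a * ((a - b) / (1 - starRingEnd ℂ a * b)) ≠ 0 := by
    rw [e2]; exact div_ne_zero hA hd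
  rw [div_eq_iff hden, e2]
  have hd3 : (1:ℂ) - b * starRingEnd ℂ a ≠ 0 := by rw [mul_comm]; exact hd
  field_simp
  ring


lemma moeb_schwarzian_rel (ha : ‖a‖ < 1) (he : ‖e‖ = 1) {z : ℂ}
    (hz : z ∈ ball (0 : ℂ) 1) :
    2 * moeb1 a e z * moeb3 a e z = 3 * (moeb2 a e z) ^ 2 := by
  have hd := moeb_den_ne ha he hz
  unfold moeb1 moeb2 moeb3
  field_simp
  ring

lemma schwarzian_comp_moeb {f : ℂ → ℂ} (hf : DifferentiableOn ℂ f (ball (0 : ℂ) 1))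
    (hf' : ∀ z ∈ ball (0 : ℂ) 1, deriv f z ≠ 0)
    (ha : ‖a‖ < 1) (he : ‖e‖ = 1) {z : ℂ} (hz : z ∈ ball (0 : ℂ) 1) :
    schwarzian (fun w => f (moeb a e w)) z
      = schwarzian f (moeb a e z) * (moeb1 a e z) ^ 2 := by
  have hfa : AnalyticOnNhd ℂ f (ball (0 : ℂ) 1) := hf.analyticOnNhd isOpen_ball
  set f1 := deriv f with hf1
  set f2 := deriv f1 with hf2
  set f3 := deriv f2 with hf3
  have h1 : ∀ w ∈ ball (0 : ℂ) 1, HasDerivAt f (f1 w) w :=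
    fun w hw => ((hfa w hw).differentiableAt).hasDerivAt
  have h2 : ∀ w ∈ ball (0 : ℂ) 1, HasDerivAt f1 (f2 w) w :=
    fun w hw => ((hfa.deriv w hw).differentiableAt).hasDerivAt
  have h3 : ∀ w ∈ ball (0 : ℂ) 1, HasDerivAt f2 (f3 w) w :=
    fun w hw => (((hfa.deriv).deriv w hw).differentiableAt).hasDerivAt
  set T := moeb a e with hT
  set T1 := moeb1 a e with hT1
  set T2 := moeb2 a e with hT2
  set T3 := moeb3 a e with hT3
  have hTmem : ∀ w ∈ ball (0 : ℂ) 1, T w ∈ ball (0 : ℂ) 1 := fun w hw => moeb_mem_ball ha he hw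
  have hTd : ∀ w ∈ ball (0 : ℂ) 1, HasDerivAt T (T1 w) w := fun w hw => moeb_hasDerivAt ha he hw
  have hTd1 : ∀ w ∈ ball (0 : ℂ) 1, HasDerivAt T1 (T2 w) w := fun w hw => moeb1_hasDerivAt ha he hw
  have hTd2 : ∀ w ∈ ball (0 : ℂ) 1, HasDerivAt T2 (T3 w) w := fun w hw => moeb2_hasDerivAt ha he hw
  have hg1 : ∀ w ∈ ball (0 : ℂ) 1,
      HasDerivAt (fun u => f (T u)) (f1 (T w) * T1 w) w := by
    intro w hw
    exact (h1 (T w) (hTmem w hw)).comp w (hTd w hw)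
  have hg2 : ∀ w ∈ ball (0 : ℂ) 1,
      HasDerivAt (fun u => f1 (T u) * T1 u) (f2 (T w) * T1 w * T1 w + f1 (T w) * T2 w) w := by
    intro w hw
    exact ((h2 (T w) (hTmem w hw)).comp w (hTd w hw)).mul (hTd1 w hw)
  have hg3 : ∀ w ∈ ball (0 : ℂ) 1,
      HasDerivAt (fun u => f2 (T u) * T1 u * T1 u + f1 (T u) * T2 u)
        (f3 (T w) * T1 w ^ 3 + 3 * f2 (T w) * T1 w * T2 w + f1 (T w) * T3 w) w := by
    intro w hw
    have hA : HasDerivAt (fun u => f2 (T u) * T1 u * T1 u)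
        ((((h3 (T w) (hTmem w hw)).comp w (hTd w hw)).mul (hTd1 w hw)).mul (hTd1 w hw) |> fun _ => 
          ((f3 (T w) * T1 w * T1 w + f2 (T w) * T2 w) * T1 w + f2 (T w) * T1 w * T2 w)) w := by
      exact (((h3 (T w) (hTmem w hw)).comp w (hTd w hw)).mul (hTd1 w hw)).mul (hTd1 w hw)
    have hB : HasDerivAt (fun u => f1 (T u) * T2 u)
        ((f2 (T w) * T1 w) * T2 w + f1 (T w) * T3 w) w :=
      ((h2 (T w) (hTmem w hw)).comp w (hTd w hw)).mul (hTd2 w hw)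
    have := hA.add hB
    refine this.congr_deriv (Eq.symm ?_)
    ring
  have hSg := schwarzian_eq_on isOpen_ball hg1 hg2 hg3 hz
  have hSf := schwarzian_eq_on isOpen_ball h1 h2 h3 (hTmem z hz)
  rw [hSg, hSf]
  have hfz : f1 (T z) ≠ 0 := hf' (T z) (hTmem z hz)
  have htz : T1 z ≠ 0 := moeb1_ne_zero ha he hz
  have hrel := moeb_schwarzian_rel ha he hz
  have ht3 : T3 z = 3 * (T2 z) ^ 2 / (2 * T1 z) := by
    rw [eq_div_iff (by simp [htz] : (2 : ℂ) * T1 z ≠ 0)]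
    linear_combination hrel
  rw [ht3]
  field_simp
  ring


lemma hS_transfer {f : ℂ → ℂ} (hf : DifferentiableOn ℂ f (ball (0 : ℂ) 1))
    (hf' : ∀ z ∈ ball (0 : ℂ) 1, deriv f z ≠ 0)
    (hS : ∀ z ∈ ball (0 : ℂ) 1,
      (1 - ‖z‖ ^ 2) ^ 2 * ‖schwarzian f z‖ ≤ 2)
    (ha : ‖a‖ < 1) (he : ‖e‖ = 1) {z : ℂ} (hz : z ∈ ball (0 : ℂ) 1) :
    (1 - ‖z‖ ^ 2) ^ 2 * ‖schwarzian (fun w => f (moeb a e w)) z‖ ≤ 2 := by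
  rw [schwarzian_comp_moeb hf hf' ha he hz, norm_mul, norm_pow]
  have hkey := moeb_key ha he hz
  have hb := hS (moeb a e z) (moeb_mem_ball ha he hz)
  calc (1 - ‖z‖ ^ 2) ^ 2 *
        (‖schwarzian f (moeb a e z)‖ * ‖moeb1 a e z‖ ^ 2)
      = (‖moeb1 a e z‖ * (1 - ‖z‖ ^ 2)) ^ 2 *
        ‖schwarzian f (moeb a e z)‖ := by ring
    _ = (1 - ‖moeb a e z‖ ^ 2) ^ 2 * ‖schwarzian f (moeb a e z)‖ := by
        rw [hkey]
    _ ≤ 2 := hb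



lemma ode_algebra (G1 G2 G3 G0 H : ℂ) (h1 : G1 ≠ 0) :
    -((G3 / G1 - 3 / 2 * (G2 / G1) ^ 2) / 2) * (G0 * H)
      = G2 * H + G1 * (-(G2 / (2 * G1)) * H) +
        (G1 * (-(G2 / (2 * G1)) * H) +
          G0 * (-((G3 * (2 * G1) - G2 * (2 * G2)) / (2 * G1) ^ 2) * H +
            -(G2 / (2 * G1)) * (-(G2 / (2 * G1)) * H))) := by
  field_simp
  ring_nf

/-- Local branch `Y = (g - g 0) / sqrt (g')` near a point of the disk, satisfying the
linear ODE `Y'' = -(S g / 2) Y`. -/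
lemma local_branch {g : ℂ → ℂ} (hg : DifferentiableOn ℂ g (ball (0 : ℂ) 1))
    (hg' : ∀ z ∈ ball (0 : ℂ) 1, deriv g z ≠ 0) {x : ℂ} (hx : x ∈ ball (0 : ℂ) 1) :
    ∃ (U : Set ℂ) (Y Y1 : ℂ → ℂ), IsOpen U ∧ x ∈ U ∧ U ⊆ ball (0 : ℂ) 1 ∧
      (∀ z ∈ U, ‖Y z‖
        = ‖g z - g 0‖ * (Real.sqrt (‖deriv g z‖))⁻¹) ∧
      (∀ z ∈ U, HasDerivAt Y (Y1 z) z) ∧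
      (∀ z ∈ U, HasDerivAt Y1 (-(schwarzian g z / 2) * Y z) z) := by
  have hga : AnalyticOnNhd ℂ g (ball (0 : ℂ) 1) := hg.analyticOnNhd isOpen_ball
  set g1 := deriv g with hg1def
  set g2 := deriv g1 with hg2def
  set g3 := deriv g2 with hg3def
  have h1 : ∀ w ∈ ball (0 : ℂ) 1, HasDerivAt g (g1 w) w :=
    fun w hw => ((hga w hw).differentiableAt).hasDerivAt
  have h2 : ∀ w ∈ ball (0 : ℂ) 1, HasDerivAt g1 (g2 w) w :=
    fun w hw => ((hga.deriv w hw).differentiableAt).hasDerivAt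
  have h3 : ∀ w ∈ ball (0 : ℂ) 1, HasDerivAt g2 (g3 w) w :=
    fun w hw => (((hga.deriv).deriv w hw).differentiableAt).hasDerivAt
  set d := g1 x with hd_def
  have hd0 : d ≠ 0 := hg' x hx
  set U : Set ℂ := ball (0 : ℂ) 1 ∩ (fun z => g1 z / d) ⁻¹' Complex.slitPlane with hU
  have hg1cont : ContinuousOn (fun z => g1 z / d) (ball (0 : ℂ) 1) :=
    fun w hw => ((h2 w hw).differentiableAt.continuousAt.div_const d).continuousWithinAt
  have hUopen : IsOpen U :=
    hg1cont.isOpen_inter_preimage isOpen_ball Complex.isOpen_slitPlane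
  have hxU : x ∈ U := by
    refine ⟨hx, ?_⟩
    simp only [Set.mem_preimage, ← hd_def, div_self hd0]
    exact Complex.one_mem_slitPlane
  have hUsub : U ⊆ ball (0 : ℂ) 1 := Set.inter_subset_left
  -- the branch of (g')^{-1/2}
  set hc : ℂ := Complex.exp (Complex.log d * (-(1 : ℂ) / 2)) with hc_def
  set h : ℂ → ℂ := fun z => Complex.exp (Complex.log (g1 z / d) * (-(1 : ℂ) / 2)) * hc with hh_def
  have hg1ne : ∀ z ∈ U, g1 z ≠ 0 := fun z hz => hg' z (hUsub hz)
  have hslit : ∀ z ∈ U, g1 z / d ∈ Complex.slitPlane := fun z hz => hz.2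
  have hsq : ∀ z ∈ U, h z ^ 2 = (g1 z)⁻¹ := by
    intro z hz
    have hne : g1 z / d ≠ 0 := div_ne_zero (hg1ne z hz) hd0
    simp only [hh_def, hc_def]
    rw [mul_pow, ← Complex.exp_nat_mul, ← Complex.exp_nat_mul, ← Complex.exp_add]
    have : (2 : ℕ) * (Complex.log (g1 z / d) * (-1 / 2)) + (2:ℕ) * (Complex.log d * (-1/2))
        = -(Complex.log (g1 z / d) + Complex.log d) := by push_cast; ring
    rw [this, Complex.exp_neg, Complex.exp_add, Complex.exp_log hne, Complex.exp_log hd0]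
    rw [div_mul_cancel₀ _ hd0]
  have habs : ∀ z ∈ U, ‖h z‖ = (Real.sqrt (‖g1 z‖))⁻¹ := by
    intro z hz
    have h2' : ‖h z‖ ^ 2 = (‖g1 z‖)⁻¹ := by
      rw [← norm_pow, hsq z hz, norm_inv]
    have : ‖h z‖ = Real.sqrt (‖h z‖ ^ 2) :=
      (Real.sqrt_sq (norm_nonneg _)).symm
    rw [this, h2', Real.sqrt_inv]
  -- derivative of h
  set c : ℂ → ℂ := fun z => -(g2 z / (2 * g1 z)) with hcfun
  have hhd : ∀ z ∈ U, HasDerivAt h (c z * h z) z := by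
    intro z hz
    have hlog : HasDerivAt (fun w => Complex.log (g1 w / d))
        ((g2 z / d) / (g1 z / d)) z :=
      HasDerivAt.clog ((h2 z (hUsub hz)).div_const d) (hslit z hz)
    have := ((hlog.mul_const (-(1 : ℂ) / 2)).cexp).mul_const hc
    refine this.congr_deriv (Eq.symm ?_)
    simp only [hcfun, hh_def]
    field_simp [hg1ne z hz]
  refine ⟨U, fun z => (g z - g 0) * h z,
    fun z => g1 z * h z + (g z - g 0) * (c z * h z), hUopen, hxU, hUsub, ?_, ?_, ?_⟩
  · intro z hz
    rw [norm_mul, habs z hz, hg1def]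
  · intro z hz
    exact (((h1 z (hUsub hz)).sub_const (g 0)).mul (hhd z hz))
  · intro z hz
    have hz' := hUsub hz
    have hcd : HasDerivAt c
        (-((g3 z * (2 * g1 z) - g2 z * (2 * g2 z)) / (2 * g1 z) ^ 2)) z := by
      have := ((h3 z hz').div ((h2 z hz').const_mul 2) (by
        simpa using hg1ne z hz)).neg
      exact this
    have hch : HasDerivAt (fun w => c w * h w)
        (-((g3 z * (2 * g1 z) - g2 z * (2 * g2 z)) / (2 * g1 z) ^ 2) * h z
          + c z * (c z * h z)) z := hcd.mul (hhd z hz)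
    have hterm2 : HasDerivAt (fun w => (g w - g 0) * (c w * h w))
        (g1 z * (c z * h z) + (g z - g 0) *
          (-((g3 z * (2 * g1 z) - g2 z * (2 * g2 z)) / (2 * g1 z) ^ 2) * h z
            + c z * (c z * h z))) z :=
      ((h1 z hz').sub_const (g 0)).mul hch
    have hterm1 : HasDerivAt (fun w => g1 w * h w)
        (g2 z * h z + g1 z * (c z * h z)) z := (h2 z hz').mul (hhd z hz)
    have := hterm1.add hterm2
    refine this.congr_deriv (Eq.symm ?_)
    rw [schwarzian_eq_on isOpen_ball h1 h2 h3 hz']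
    simp only [hcfun]
    exact ode_algebra (g1 z) (g2 z) (g3 z) (g z - g 0) (h z) (hg1ne z hz)


lemma inner_self_normSq (z : ℂ) : (inner ℝ (z) (z) : ℝ) = Complex.normSq z := by
  rw [Complex.inner, Complex.mul_conj]
  simp

noncomputable def vfun (g : ℂ → ℂ) (t : ℝ) : ℝ :=
  ‖g t - g 0‖ * (Real.sqrt (‖deriv g t‖))⁻¹

lemma vfun_props {g : ℂ → ℂ} (hg : DifferentiableOn ℂ g (ball (0:ℂ) 1))
    (hg' : ∀ z ∈ ball (0:ℂ) 1, deriv g z ≠ 0)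
    (hSg : ∀ z ∈ ball (0:ℂ) 1, (1 - ‖z‖ ^ 2) ^ 2 * ‖schwarzian g z‖ ≤ 2)
    {x : ℝ} (hx1 : |x| < 1) (hne : g x ≠ g 0) :
    HasDerivAt (vfun g) (deriv (vfun g) x) x ∧
    HasDerivAt (deriv (vfun g)) (deriv (deriv (vfun g)) x) x ∧
    0 ≤ deriv (deriv (vfun g)) x + ((1 - x ^ 2) ^ 2)⁻¹ * vfun g x := by
  have hxball : ((x : ℂ)) ∈ ball (0 : ℂ) 1 := by
    simp only [mem_ball, dist_zero_right, Complex.norm_real, Real.norm_eq_abs]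
    exact hx1
  obtain ⟨U, Y, Y1, hUopen, hxU, hUsub, habs, hYd, hY1d⟩ := local_branch hg hg' hxball
  set J : Set ℝ := (fun t : ℝ => (t : ℂ)) ⁻¹' U with hJdef
  have hJopen : IsOpen J := hUopen.preimage Complex.continuous_ofReal
  have hxJ : x ∈ J := hxU
  set w : ℝ → ℝ := fun t => Complex.normSq (Y t) with hwdef
  set W1 : ℝ → ℝ := fun t => 2 * (inner ℝ (Y t) (Y1 t) : ℝ) with hW1def
  have hyd : ∀ t ∈ J, HasDerivAt (fun s : ℝ => Y s) (Y1 t) t :=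
    fun t ht => (hYd _ ht).comp_ofReal
  have hy1d : ∀ t ∈ J, HasDerivAt (fun s : ℝ => Y1 s)
      (-(schwarzian g t / 2) * Y t) t := fun t ht => (hY1d _ ht).comp_ofReal
  have hwd : ∀ t ∈ J, HasDerivAt w (W1 t) t := by
    intro t ht
    have := ((hyd t ht).inner ℝ (hyd t ht))
    have heq : w = fun s : ℝ => (inner ℝ (Y s) (Y s) : ℝ) := by
      funext s; rw [inner_self_normSq]
    rw [heq]
    refine this.congr_deriv (Eq.symm ?_)
    rw [hW1def, real_inner_comm (Y (t:ℂ)) (Y1 (t:ℂ))]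
    ring
  have hW1d : ∀ t ∈ J, HasDerivAt W1
      (2 * ((inner ℝ (Y t) (-(schwarzian g t / 2) * Y t) : ℝ) + (inner ℝ (Y1 t) (Y1 t) : ℝ))) t :=
    fun t ht => ((hyd t ht).inner ℝ (hy1d t ht)).const_mul 2
  have hveq : ∀ t ∈ J, vfun g t = Real.sqrt (w t) := by
    intro t ht
    rw [hwdef]
    rw [show Real.sqrt (Complex.normSq (Y t)) = ‖Y t‖ from (Complex.norm_def _).symm]
    rw [habs _ ht]
    rfl
  -- positivity at x
  have hd' : deriv g x ≠ 0 := hg' _ hxball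
  have hvx : 0 < vfun g x :=
    mul_pos (norm_pos_iff.2 (sub_ne_zero.2 hne))
      (inv_pos.2 (Real.sqrt_pos.2 (norm_pos_iff.2 hd')))
  have hwx : 0 < w x := by
    have h1 : ‖Y x‖ = vfun g x := by
      rw [habs _ hxU]; rfl
    have : Y (x : ℂ) ≠ 0 := by
      intro h0; rw [h0] at h1; simp at h1; exact absurd h1.symm (ne_of_gt hvx)
    exact Complex.normSq_pos.2 this
  set J' : Set ℝ := {t ∈ J | w t ≠ 0} with hJ'def
  have hJ'open : IsOpen J' := by
    rw [isOpen_iff_mem_nhds]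
    rintro t ⟨htJ, htw⟩
    have hcont : ContinuousAt w t := (hwd t htJ).continuousAt
    have h1 : ∀ᶠ s in nhds t, w s ≠ 0 := hcont.eventually_ne htw
    have h2 : ∀ᶠ s in nhds t, s ∈ J := hJopen.mem_nhds htJ
    filter_upwards [h1, h2] with s hs1 hs2
    exact ⟨hs2, hs1⟩
  have hxJ' : x ∈ J' := ⟨hxJ, ne_of_gt hwx⟩
  -- first derivative of v on J'
  have hvd : ∀ t ∈ J', HasDerivAt (vfun g) (W1 t / (2 * Real.sqrt (w t))) t := by
    rintro t ⟨htJ, htw⟩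
    have h1 : HasDerivAt (fun s => Real.sqrt (w s))
        (1 / (2 * Real.sqrt (w t)) * W1 t) t :=
      (Real.hasDerivAt_sqrt htw).comp t (hwd t htJ)
    have h2 : HasDerivAt (vfun g) (1 / (2 * Real.sqrt (w t)) * W1 t) t :=
      h1.congr_of_eventuallyEq
        (Filter.eventuallyEq_of_mem (hJopen.mem_nhds htJ) (fun s hs => hveq s hs))
    convert h2 using 1
    ring
  have hD1 : ∀ t ∈ J', deriv (vfun g) t = W1 t / (2 * Real.sqrt (w t)) :=
    fun t ht => (hvd t ht).deriv
  have hfirst : HasDerivAt (vfun g) (deriv (vfun g) x) x := by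
    rw [hD1 x hxJ']; exact hvd x hxJ'
  -- second derivative
  set s : ℝ := Real.sqrt (w x) with hsdef
  have hs : 0 < s := Real.sqrt_pos.2 hwx
  set W2 : ℝ := 2 * ((inner ℝ (Y x) (-(schwarzian g x / 2) * Y x) : ℝ) + (inner ℝ (Y1 x) (Y1 x) : ℝ))
    with hW2def
  have hden : HasDerivAt (fun t => 2 * Real.sqrt (w t)) (2 * (1 / (2 * s) * W1 x)) x :=
    ((Real.hasDerivAt_sqrt (ne_of_gt hwx)).comp x (hwd x hxJ)).const_mul 2
  have hdiv : HasDerivAt (fun t => W1 t / (2 * Real.sqrt (w t)))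
      ((W2 * (2 * s) - W1 x * (2 * (1 / (2 * s) * W1 x))) / (2 * s) ^ 2) x :=
    (hW1d x hxJ).div hden (by positivity)
  have hsecond : HasDerivAt (deriv (vfun g))
      ((W2 * (2 * s) - W1 x * (2 * (1 / (2 * s) * W1 x))) / (2 * s) ^ 2) x :=
    hdiv.congr_of_eventuallyEq
      (Filter.eventuallyEq_of_mem (hJ'open.mem_nhds hxJ') (fun t ht => hD1 t ht))
  refine ⟨hfirst, by rw [hsecond.deriv]; exact hsecond, ?_⟩
  rw [hsecond.deriv]
  -- the inequality
  set q : ℝ := ((1 - x ^ 2) ^ 2)⁻¹ with hqdef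
  have hx2 : x ^ 2 < 1 := by nlinarith [abs_nonneg x, _root_.sq_abs x, hx1]
  have hpos2 : (0:ℝ) < (1 - x ^ 2) ^ 2 := by nlinarith
  have hqpos : 0 < q := by rw [hqdef]; exact inv_pos.2 hpos2
  set p : ℂ := schwarzian g x / 2 with hpdef
  have hip2 : (inner ℝ (Y x) (-p * Y x) : ℝ) = -p.re * w x := by
    rw [Complex.inner]
    have h3 : (-p * Y x) * (starRingEnd ℂ) (Y x)
        = -p * ((Complex.normSq (Y x) : ℝ) : ℂ) := by
      rw [← Complex.mul_conj]; ring
    rw [h3]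
    simp [Complex.mul_re]
    exact Or.inl rfl
  have hpre : p.re ≤ q := by
    have h1 := hSg _ hxball
    have h2 : ‖(x : ℂ)‖ = |x| := by rw [Complex.norm_real, Real.norm_eq_abs]
    rw [h2, _root_.sq_abs] at h1
    have h3 : ‖schwarzian g x‖ ≤ 2 * q := by
      have h4 : ‖schwarzian g x‖ * (1 - x ^ 2) ^ 2 ≤ 2 := by nlinarith [h1]
      have h5 := (le_div_iff₀ hpos2).2 h4
      rw [div_eq_mul_inv, ← hqdef] at h5
      exact h5
    calc p.re ≤ |p.re| := le_abs_self _
      _ ≤ ‖p‖ := Complex.abs_re_le_norm p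
      _ = ‖schwarzian g x‖ / 2 := by rw [hpdef, norm_div]; simp
      _ ≤ q := by linarith
  set n1 : ℝ := (inner ℝ (Y1 x) (Y1 x) : ℝ) with hn1def
  set ip : ℝ := (inner ℝ (Y x) (Y1 x) : ℝ) with hipdef
  have hcs : ip * ip ≤ w x * n1 := by
    have := real_inner_mul_inner_self_le (Y (x:ℂ)) (Y1 (x:ℂ))
    rwa [inner_self_normSq] at this
  have hn1 : 0 ≤ n1 := real_inner_self_nonneg
  have hws : s ^ 2 = w x := Real.sq_sqrt (Complex.normSq_nonneg _)
  have hW2val : W2 = 2 * (-p.re * w x + n1) := by rw [hW2def, hip2, hpdef]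
  have hvxs : vfun g x = s := by rw [hveq x hxJ]
  rw [hvxs]
  have key : 0 ≤ 2 * w x * W2 - (W1 x) ^ 2 + 4 * q * (w x) ^ 2 := by
    have hW1x : W1 x = 2 * ip := rfl
    rw [hW2val, hW1x]
    nlinarith [hcs, mul_nonneg (sub_nonneg.mpr hpre) (sq_nonneg (w x)),
      Complex.normSq_nonneg (Y (x:ℂ))]
  have heq : (W2 * (2 * s) - W1 x * (2 * (1 / (2 * s) * W1 x))) / (2 * s) ^ 2 + q * s
      = (2 * w x * W2 - (W1 x) ^ 2 + 4 * q * (w x) ^ 2) / (4 * s ^ 3) := by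
    rw [← hws]
    field_simp
    ring
  rw [heq]
  positivity


lemma sturm {α β : ℝ} (hαβ : α < β) (hα : 0 ≤ α) (hβ : β < 1) {v : ℝ → ℝ}
    (hvcont : ContinuousOn v (Icc α β)) (hvα : v α = 0) (hvβ : v β = 0)
    (hvpos : ∀ t ∈ Ioo α β, 0 < v t)
    (hv1 : ∀ t ∈ Ioo α β, HasDerivAt v (deriv v t) t)
    (hv2 : ∀ t ∈ Ioo α β, HasDerivAt (deriv v) (deriv (deriv v) t) t)
    (hineq : ∀ t ∈ Ioo α β, 0 ≤ deriv (deriv v) t + ((1 - t ^ 2) ^ 2)⁻¹ * v t) : False := by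
  have hsq : ∀ t ∈ Icc α β, t ^ 2 < 1 := by
    rintro t ⟨ht1, ht2⟩; nlinarith
  set u : ℝ → ℝ := fun t => Real.sqrt (1 - t ^ 2) with hudef
  set u1 : ℝ → ℝ := fun t => -t / Real.sqrt (1 - t ^ 2) with hu1def
  have hupos : ∀ t ∈ Icc α β, 0 < u t := by
    intro t ht; exact Real.sqrt_pos.2 (by nlinarith [hsq t ht])
  have huderiv : ∀ t ∈ Icc α β, HasDerivAt u (u1 t) t := by
    intro t ht
    have h2 : (1 : ℝ) - t ^ 2 ≠ 0 := by nlinarith [hsq t ht]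
    have hin : HasDerivAt (fun s : ℝ => 1 - s ^ 2) (-(2 * t)) t := by
      simpa using (hasDerivAt_pow 2 t).const_sub 1
    have := (Real.hasDerivAt_sqrt h2).comp t hin
    refine this.congr_deriv (Eq.symm ?_)
    rw [hu1def]
    field_simp
  have hu1deriv : ∀ t ∈ Icc α β,
      HasDerivAt u1 (-(((1 - t ^ 2) ^ 2)⁻¹) * u t) t := by
    intro t ht
    have hue := hupos t ht
    have hs2 : u t ^ 2 = 1 - t ^ 2 := Real.sq_sqrt (by nlinarith [hsq t ht])
    have hdiv : HasDerivAt u1 ((-1 * u t - -t * u1 t) / u t ^ 2) t :=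
      HasDerivAt.div (by exact (hasDerivAt_id t).neg) (huderiv t ht) (ne_of_gt hue)
    convert hdiv using 1
    have key : ∀ s : ℝ, 0 < s → s ^ 2 = 1 - t ^ 2 →
        (-1 * s - -t * (-t / s)) / s ^ 2 = -(((1 - t ^ 2) ^ 2)⁻¹) * s := by
      intro s hs hs2'
      rw [← hs2']
      have hne : s ≠ 0 := ne_of_gt hs
      field_simp
      linear_combination (-1 : ℝ) * hs2'
    exact (key (u t) hue hs2).symm
  set W : ℝ → ℝ := fun t => deriv v t * u t - v t * u1 t with hWdef
  have hWd : ∀ t ∈ Ioo α β, HasDerivAt W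
      (deriv (deriv v) t * u t - v t * (-(((1 - t ^ 2) ^ 2)⁻¹) * u t)) t := by
    intro t ht
    have htI : t ∈ Icc α β := Ioo_subset_Icc_self ht
    have h1 := ((hv2 t ht).mul (huderiv t htI)).sub ((hv1 t ht).mul (hu1deriv t htI))
    refine h1.congr_deriv (Eq.symm ?_)
    ring
  have hWmono : MonotoneOn W (Ioo α β) := by
    apply monotoneOn_of_deriv_nonneg (convex_Ioo α β)
    · intro t ht; exact (hWd t ht).continuousAt.continuousWithinAt
    · rw [interior_Ioo]; intro t ht
      exact (hWd t ht).differentiableAt.differentiableWithinAt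
    · rw [interior_Ioo]; intro t ht
      rw [(hWd t ht).deriv]
      have htI : t ∈ Icc α β := Ioo_subset_Icc_self ht
      have h1 := hineq t ht
      have h2 := hupos t htI
      have h3 := (hvpos t ht).le
      have : deriv (deriv v) t * u t - v t * (-(((1 - t ^ 2) ^ 2)⁻¹) * u t)
          = (deriv (deriv v) t + ((1 - t ^ 2) ^ 2)⁻¹ * v t) * u t := by ring
      rw [this]
      positivity
  set φ : ℝ → ℝ := fun t => v t / u t with hφdef
  have hucont : ContinuousOn u (Icc α β) :=
    (Real.continuous_sqrt.comp (by continuity)).continuousOn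
  have hφcont : ContinuousOn φ (Icc α β) :=
    hvcont.div hucont (fun t ht => ne_of_gt (hupos t ht))
  obtain ⟨ξ, hξIcc, hξmax⟩ := isCompact_Icc.exists_isMaxOn
    (nonempty_Icc.2 hαβ.le) hφcont
  set mid := (α + β) / 2 with hmid
  have hmidI : mid ∈ Ioo α β := ⟨by linarith, by linarith⟩
  have hφmid : 0 < φ mid :=
    div_pos (hvpos mid hmidI) (hupos mid (Ioo_subset_Icc_self hmidI))
  have hφξ : 0 < φ ξ := lt_of_lt_of_le hφmid (hξmax (Ioo_subset_Icc_self hmidI))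
  have hφα : φ α = 0 := by rw [hφdef]; simp [hvα]
  have hφβ : φ β = 0 := by rw [hφdef]; simp [hvβ]
  have hξIoo : ξ ∈ Ioo α β := by
    rcases eq_or_lt_of_le hξIcc.1 with h | h
    · exfalso; rw [← h, hφα] at hφξ; exact lt_irrefl 0 hφξ
    · rcases eq_or_lt_of_le hξIcc.2 with h2 | h2
      · exfalso; rw [h2, hφβ] at hφξ; exact lt_irrefl 0 hφξ
      · exact ⟨h, h2⟩
  -- derivative of φ
  have hφd : ∀ t ∈ Ioo α β, HasDerivAt φ (W t / u t ^ 2) t := by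
    intro t ht
    exact (hv1 t ht).div (huderiv t (Ioo_subset_Icc_self ht))
      (ne_of_gt (hupos t (Ioo_subset_Icc_self ht)))
  -- deriv φ ξ = 0 and hence W ξ = 0
  have hloc : IsLocalMax φ ξ :=
    hξmax.isLocalMax (Icc_mem_nhds hξIoo.1 hξIoo.2)
  have hd0 : deriv φ ξ = 0 := hloc.deriv_eq_zero
  have hWξ : W ξ = 0 := by
    have := (hφd ξ hξIoo).deriv
    rw [hd0] at this
    have hu2 : u ξ ^ 2 ≠ 0 := ne_of_gt (pow_pos (hupos ξ (Ioo_subset_Icc_self hξIoo)) 2)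
    field_simp at this
    exact (div_eq_zero_iff.1 this.symm).resolve_right hu2
  -- φ is antitone on [α, ξ]
  have hanti : AntitoneOn φ (Icc α ξ) := by
    apply antitoneOn_of_deriv_nonpos (convex_Icc α ξ)
    · exact hφcont.mono (Icc_subset_Icc_right hξIcc.2)
    · rw [interior_Icc]; intro t ht
      have htI : t ∈ Ioo α β := ⟨ht.1, lt_of_lt_of_le ht.2 hξIcc.2⟩
      exact (hφd t htI).differentiableAt.differentiableWithinAt
    · rw [interior_Icc]; intro t ht
      have htI : t ∈ Ioo α β := ⟨ht.1, lt_of_lt_of_le ht.2 hξIcc.2⟩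
      rw [(hφd t htI).deriv]
      have hWt : W t ≤ 0 := by
        rw [← hWξ]
        exact hWmono htI hξIoo ht.2.le
      have hu2 : 0 < u t ^ 2 := pow_pos (hupos t (Ioo_subset_Icc_self htI)) 2
      exact div_nonpos_of_nonpos_of_nonneg hWt hu2.le
  have : φ ξ ≤ φ α :=
    hanti (left_mem_Icc.2 hξIcc.1) (right_mem_Icc.2 hξIcc.1) hξIcc.1
  rw [hφα] at this
  linarith


/-- Nehari-type theorem, "radius 2" half: if `f` is holomorphic on the open unit disk with
nonvanishing derivative and `(1 - |z|²)² |S f(z)| ≤ 2` everywhere on the disk, then `f` is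
injective on the disk. -/
theorem nehari_schwarzian_bound_injective (f : ℂ → ℂ)
    (hf : DifferentiableOn ℂ f (ball (0 : ℂ) 1))
    (hf' : ∀ z ∈ ball (0 : ℂ) 1, deriv f z ≠ 0)
    (hS : ∀ z ∈ ball (0 : ℂ) 1,
      (1 - ‖z‖ ^ 2) ^ 2 * ‖schwarzian f z‖ ≤ 2) :
    InjOn f (ball (0 : ℂ) 1) := by
  intro a ha b hb hab
  by_contra hne
  have ha' : ‖a‖ < 1 := by simpa using ha
  have hb' : ‖b‖ < 1 := by simpa using hb
  -- the Möbius parameters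
  set w : ℂ := (a - b) / (1 - starRingEnd ℂ a * b) with hwdef
  have habs1 : ‖(1 : ℂ)‖ = 1 := by simp
  have hwmoeb : w = moeb a 1 b := by rw [hwdef]; unfold moeb; simp
  have hwball : ‖w‖ < 1 := by
    rw [hwmoeb]
    have := moeb_mem_ball ha' habs1 hb
    simpa using this
  have hw0 : w ≠ 0 := by
    rw [hwdef]
    intro h
    rcases div_eq_zero_iff.1 h with h1 | h1
    · exact hne (sub_eq_zero.1 h1)
    · have hd : (1 : ℂ) - starRingEnd ℂ a * b ≠ 0 := by
        intro h2
        rw [sub_eq_zero] at h2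
        have : ‖(starRingEnd ℂ a) * b‖ < 1 := by
          rw [norm_mul, Complex.norm_conj]
          nlinarith [norm_nonneg a, norm_nonneg b]
        rw [← h2] at this; simp at this
      exact hd (by rw [← h1])
  set r : ℝ := ‖w‖ with hrdef
  have hr0 : 0 < r := norm_pos_iff.2 hw0
  have hr1 : r < 1 := hwball
  set e : ℂ := w / (r : ℂ) with hedef
  have hre : (r : ℂ) ≠ 0 := by exact_mod_cast ne_of_gt hr0
  have he : ‖e‖ = 1 := by
    rw [hedef, norm_div, Complex.norm_real, Real.norm_eq_abs, abs_of_pos hr0, ← hrdef, div_self (ne_of_gt hr0)]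
  have hr : e * (r : ℂ) = w := by rw [hedef]; field_simp
  -- the transported function
  set g : ℂ → ℂ := fun z => f (moeb a e z) with hgdef
  have hfa : AnalyticOnNhd ℂ f (ball (0 : ℂ) 1) := hf.analyticOnNhd isOpen_ball
  have hgd : ∀ z ∈ ball (0 : ℂ) 1,
      HasDerivAt g (deriv f (moeb a e z) * moeb1 a e z) z := by
    intro z hz
    exact ((hfa _ (moeb_mem_ball ha' he hz)).differentiableAt.hasDerivAt).comp z
      (moeb_hasDerivAt ha' he hz)
  have hgdiff : DifferentiableOn ℂ g (ball (0 : ℂ) 1) :=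
    fun z hz => ((hgd z hz).differentiableAt).differentiableWithinAt
  have hg' : ∀ z ∈ ball (0 : ℂ) 1, deriv g z ≠ 0 := by
    intro z hz
    rw [(hgd z hz).deriv]
    exact mul_ne_zero (hf' _ (moeb_mem_ball ha' he hz)) (moeb1_ne_zero ha' he hz)
  have hSg : ∀ z ∈ ball (0 : ℂ) 1,
      (1 - ‖z‖ ^ 2) ^ 2 * ‖schwarzian g z‖ ≤ 2 :=
    fun z hz => hS_transfer hf hf' hS ha' he hz
  -- endpoint values
  have hg0 : g 0 = f a := by rw [hgdef]; simp [moeb_zero]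
  have hgr : g (r : ℂ) = f b := by
    have hv := moeb_val ha' hb' he (by rw [hr, hwdef])
    show f (moeb a e (r : ℂ)) = f b
    rw [hv]
  have hgr0 : g (r : ℂ) = g 0 := by rw [hgr, hg0, hab]
  -- isolated zero at 0
  have h0ball : (0 : ℂ) ∈ ball (0 : ℂ) 1 := by simp
  have hy0 : HasDerivAt (fun t : ℝ => g t) (deriv g 0) 0 := by
    have := (hgd 0 h0ball)
    rw [(hgd 0 h0ball).deriv]
    exact_mod_cast this.comp_ofReal
  have hev : ∀ᶠ t : ℝ in nhdsWithin (0 : ℝ) ({(0:ℝ)}ᶜ : Set ℝ), g (t : ℂ) ≠ g 0 := by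
    have := hy0.eventually_ne (c := g 0) (hg' 0 h0ball)
    simpa using this
  rw [eventually_nhdsWithin_iff, Metric.eventually_nhds_iff] at hev
  obtain ⟨δ₀, hδ₀pos, hδ₀⟩ := hev
  -- the zero set and its infimum
  set S : Set ℝ := {t | t ∈ Icc (min δ₀ r) r ∧ g t = g 0} with hSdef
  have hrS : r ∈ S := ⟨⟨min_le_right _ _, le_refl r⟩, hgr0⟩
  have hscont : ∀ s : Set ℝ, (∀ t ∈ s, |t| < 1) → ContinuousOn (fun t : ℝ => g (t:ℂ)) s := by
    intro s hs
    apply (hgdiff.continuousOn).comp Complex.continuous_ofReal.continuousOn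
    intro t ht
    simp only [Set.mem_preimage, mem_ball, dist_zero_right, Complex.norm_real, Real.norm_eq_abs]
    exact hs t ht
  have hSclosed : IsClosed S := by
    rw [hSdef]
    exact (hscont (Icc (min δ₀ r) r) (fun t ht => by
      rw [abs_lt]
      constructor
      · have : 0 < min δ₀ r := lt_min hδ₀pos hr0
        nlinarith [ht.1]
      · linarith [ht.2])).preimage_isClosed_of_isClosed isClosed_Icc isClosed_singleton
  set β : ℝ := sInf S with hβdef
  have hSbdd : BddBelow S := ⟨min δ₀ r, fun s hs => hs.1.1⟩
  have hβS : β ∈ S := hSclosed.csInf_mem ⟨r, hrS⟩ hSbdd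
  have hβpos : 0 < β := lt_of_lt_of_le (lt_min hδ₀pos hr0) hβS.1.1
  have hβler : β ≤ r := hβS.1.2
  have hβ1 : β < 1 := lt_of_le_of_lt hβler hr1
  have hgβ : g (β : ℂ) = g 0 := hβS.2
  have hmin : ∀ t ∈ Ioo (0:ℝ) β, g (t : ℂ) ≠ g 0 := by
    intro t ht h0
    by_cases hc : t < min δ₀ r
    · have h1 : dist t 0 < δ₀ := by
        rw [Real.dist_eq, sub_zero, _root_.abs_of_pos ht.1]
        exact lt_of_lt_of_le hc (min_le_left _ _)
      have h2 : t ∈ ({(0:ℝ)}ᶜ : Set ℝ) := by simp [ne_of_gt ht.1]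
      exact hδ₀ h1 h2 h0
    · push_neg at hc
      have htS : t ∈ S := ⟨⟨hc, le_trans ht.2.le hβler⟩, h0⟩
      have : β ≤ t := csInf_le hSbdd htS
      linarith [ht.2]
  -- membership facts
  have hmemball : ∀ t ∈ Icc (0:ℝ) β, (t : ℂ) ∈ ball (0 : ℂ) 1 := by
    intro t ht
    simp only [mem_ball, dist_zero_right, Complex.norm_real, Real.norm_eq_abs]
    rw [_root_.abs_of_nonneg ht.1]
    linarith [ht.2]
  -- continuity of v
  have h1c : ContinuousOn (fun t : ℝ => g (t : ℂ) - g 0) (Icc 0 β) := by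
    apply ContinuousOn.sub _ continuousOn_const
    apply hscont
    intro t ht
    rw [_root_.abs_of_nonneg ht.1]; linarith [ht.2]
  have h2c : ContinuousOn (fun t : ℝ => deriv g (t : ℂ)) (Icc 0 β) := by
    apply ((hgdiff.analyticOnNhd isOpen_ball).deriv.continuousOn).comp
      Complex.continuous_ofReal.continuousOn
    intro t ht
    exact hmemball t ht
  have hdenne : ∀ t ∈ Icc (0:ℝ) β, Real.sqrt (‖deriv g (t : ℂ)‖) ≠ 0 := by
    intro t ht
    exact ne_of_gt (Real.sqrt_pos.2 (norm_pos_iff.2 (hg' _ (hmemball t ht))))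
  have hvcont : ContinuousOn (vfun g) (Icc 0 β) := by
    have := (continuous_norm.comp_continuousOn h1c).mul
      ((Real.continuous_sqrt.comp_continuousOn
        (continuous_norm.comp_continuousOn h2c)).inv₀ hdenne)
    exact this
  have hvα : vfun g 0 = 0 := by
    unfold vfun
    rw [Complex.ofReal_zero, sub_self, norm_zero, zero_mul]
  have hvβ : vfun g β = 0 := by
    unfold vfun
    rw [hgβ, sub_self, norm_zero, zero_mul]
  have hvpos : ∀ t ∈ Ioo (0:ℝ) β, 0 < vfun g t := by
    intro t ht
    have htI : t ∈ Icc (0:ℝ) β := Ioo_subset_Icc_self ht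
    exact mul_pos (norm_pos_iff.2 (sub_ne_zero.2 (hmin t ht)))
      (inv_pos.2 (Real.sqrt_pos.2 (norm_pos_iff.2 (hg' _ (hmemball t htI)))))
  have habslt : ∀ t ∈ Ioo (0:ℝ) β, |t| < 1 := by
    intro t ht
    rw [_root_.abs_of_pos ht.1]
    linarith [ht.2]
  have hv1 : ∀ t ∈ Ioo (0:ℝ) β, HasDerivAt (vfun g) (deriv (vfun g) t) t :=
    fun t ht => (vfun_props hgdiff hg' hSg (habslt t ht) (hmin t ht)).1
  have hv2 : ∀ t ∈ Ioo (0:ℝ) β, HasDerivAt (deriv (vfun g)) (deriv (deriv (vfun g)) t) t :=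
    fun t ht => (vfun_props hgdiff hg' hSg (habslt t ht) (hmin t ht)).2.1
  have hineq : ∀ t ∈ Ioo (0:ℝ) β,
      0 ≤ deriv (deriv (vfun g)) t + ((1 - t ^ 2) ^ 2)⁻¹ * vfun g t :=
    fun t ht => (vfun_props hgdiff hg' hSg (habslt t ht) (hmin t ht)).2.2
  exact sturm hβpos le_rfl hβ1 hvcont hvα hvβ hvpos hv1 hv2 hineq
end Moebius
end

section
/- There exists a differentiable function y₀ : (0,∞) → ℝ satisfying the Riccati equation y₀'(r) = 1 − (1 + 2/r²)·y₀(r)² for all r > 0, such that 0 < y₀(r) < 1 for all r > 0 and y₀(r) → 0 as r → 0⁺. -/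
open Set Filter

private lemma pos_aux {f f' : ℝ → ℝ} (hd : ∀ x : ℝ, HasDerivAt f (f' x) x) (h0 : f 0 = 0)
    (hf' : ∀ x : ℝ, 0 < x → 0 < f' x) {x : ℝ} (hx : 0 < x) : 0 < f x := by
  have H : StrictMonoOn f (Ici 0) := by
    apply strictMonoOn_of_deriv_pos (convex_Ici 0)
    · exact fun y _ => (hd y).differentiableAt.continuousAt.continuousWithinAt
    · intro y hy
      rw [interior_Ici] at hy
      rw [(hd y).deriv]
      exact hf' y hy
  have := H self_mem_Ici (le_of_lt hx : (0:ℝ) ≤ x) hx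
  rwa [h0] at this

private lemma hexp_aux (t : ℝ) :
    HasDerivAt (fun s : ℝ => Real.exp (2 * s)) (2 * Real.exp (2 * t)) t := by
  have := (Real.hasDerivAt_exp (2 * t)).comp t ((hasDerivAt_id t).const_mul 2)
  refine this.congr_deriv ?_
  simp [mul_comm]

private lemma A_pos {r : ℝ} (hr : 0 < r) : 0 < (r + 1) + (r - 1) * Real.exp (2 * r) := by
  have hB : ∀ t : ℝ, HasDerivAt (fun s : ℝ => 1 + (2 * s - 1) * Real.exp (2 * s))
      (4 * t * Real.exp (2 * t)) t := by
    intro t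
    have h := (hasDerivAt_const t (1:ℝ)).add
      ((((hasDerivAt_id t).const_mul 2).sub_const 1).mul (hexp_aux t))
    refine h.congr_deriv ?_
    simp only [id_eq]
    ring
  have hBpos : ∀ t : ℝ, 0 < t → 0 < 1 + (2 * t - 1) * Real.exp (2 * t) := by
    intro t ht
    apply pos_aux hB (by norm_num) _ ht
    intro x hx
    positivity
  have hA : ∀ t : ℝ, HasDerivAt (fun s : ℝ => (s + 1) + (s - 1) * Real.exp (2 * s))
      (1 + (2 * t - 1) * Real.exp (2 * t)) t := by
    intro t
    have h := ((hasDerivAt_id t).add_const 1).add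
      (((hasDerivAt_id t).sub_const 1).mul (hexp_aux t))
    refine h.congr_deriv ?_
    simp only [id_eq]
    ring
  exact pos_aux hA (by norm_num) hBpos hr

/-- Existence of a solution of the Riccati equation `y' = 1 - (1 + 2/r²) y²` on `(0, ∞)`,
with `0 < y < 1` there and `y(r) → 0` as `r → 0⁺`. -/
theorem riccati_solution_exists :
    ∃ y₀ : ℝ → ℝ,
      (∀ r : ℝ, 0 < r → HasDerivAt y₀ (1 - (1 + 2 / r ^ 2) * y₀ r ^ 2) r) ∧
      (∀ r : ℝ, 0 < r → 0 < y₀ r ∧ y₀ r < 1) ∧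
      Tendsto y₀ (nhdsWithin 0 (Ioi 0)) (nhds 0) := by
  set N : ℝ → ℝ := fun t => (t ^ 2 - t) * Real.exp (2 * t) + (t ^ 2 + t) with hNdef
  set D : ℝ → ℝ := fun t => (t ^ 2 - t + 1) * Real.exp (2 * t) - (t ^ 2 + t + 1) with hDdef
  -- the series lower bound for exp (2r)
  have hE1 : ∀ r : ℝ, 0 < r →
      1 + 2 * r + 2 * r ^ 2 + (4 / 3) * r ^ 3 + (2 / 3) * r ^ 4 ≤ Real.exp (2 * r) := by
    intro r hr
    have h := Real.sum_le_exp_of_nonneg (by linarith : (0:ℝ) ≤ 2 * r) 5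
    have hsum : ∑ i ∈ Finset.range 5, (2 * r) ^ i / (Nat.factorial i) =
        1 + 2 * r + 2 * r ^ 2 + (4 / 3) * r ^ 3 + (2 / 3) * r ^ 4 := by
      simp [Finset.sum_range_succ, Nat.factorial]
      ring
    linarith [hsum ▸ h]
  have hNpos : ∀ r : ℝ, 0 < r → 0 < N r := by
    intro r hr
    have hA := A_pos hr
    have : N r = r * ((r + 1) + (r - 1) * Real.exp (2 * r)) := by
      simp only [hNdef]; ring
    rw [this]
    exact mul_pos hr hA
  have hDpos : ∀ r : ℝ, 0 < r → 0 < D r := by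
    intro r hr
    have h := hE1 r hr
    have hc : (0:ℝ) ≤ r ^ 2 - r + 1 := by nlinarith [sq_nonneg (r - 1)]
    have key := mul_le_mul_of_nonneg_left h hc
    simp only [hDdef]
    nlinarith [pow_pos hr 3, pow_pos hr 4, pow_pos hr 5, pow_pos hr 6]
  have hDN : ∀ r : ℝ, 0 < r → N r < D r := by
    intro r hr
    have h := hE1 r hr
    simp only [hNdef, hDdef]
    nlinarith [pow_pos hr 3, pow_pos hr 4]
  have hNr : ∀ r : ℝ, 0 < r → N r ≤ r * D r := by
    intro r hr
    have h := hE1 r hr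
    have hc : (0:ℝ) ≤ r ^ 2 - 2 * r + 2 := by nlinarith [sq_nonneg (r - 1)]
    have key := mul_le_mul_of_nonneg_left h hc
    simp only [hNdef, hDdef]
    nlinarith [pow_pos hr 3, pow_pos hr 4, pow_pos hr 6, mul_le_mul_of_nonneg_left key hr.le]
  refine ⟨fun t => N t / D t, ?_, ?_, ?_⟩
  · intro r hr
    have hD0 : D r ≠ 0 := ne_of_gt (hDpos r hr)
    have hP1 : HasDerivAt (fun t : ℝ => t ^ 2 - t) (2 * r - 1) r := by
      have := (hasDerivAt_pow 2 r).sub (hasDerivAt_id r); simp only [Pi.sub_def, id] at this; simpa using this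
    have hP2 : HasDerivAt (fun t : ℝ => t ^ 2 + t) (2 * r + 1) r := by
      have := (hasDerivAt_pow 2 r).add (hasDerivAt_id r); simp only [Pi.add_def, id] at this; simpa using this
    have hP3 : HasDerivAt (fun t : ℝ => t ^ 2 - t + 1) (2 * r - 1) r := hP1.add_const 1
    have hP4 : HasDerivAt (fun t : ℝ => t ^ 2 + t + 1) (2 * r + 1) r := hP2.add_const 1
    have hN : HasDerivAt N
        ((2 * r - 1) * Real.exp (2 * r) + (r ^ 2 - r) * (2 * Real.exp (2 * r)) + (2 * r + 1))
        r := (hP1.mul (hexp_aux r)).add hP2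
    have hD : HasDerivAt D
        ((2 * r - 1) * Real.exp (2 * r) + (r ^ 2 - r + 1) * (2 * Real.exp (2 * r)) - (2 * r + 1))
        r := (hP3.mul (hexp_aux r)).sub hP4
    have H := hN.div hD hD0
    refine H.congr_deriv ?_
    simp only [hNdef, hDdef]
    have hr0 : r ≠ 0 := ne_of_gt hr
    have hD1 : (r ^ 2 - r + 1) * Real.exp (2 * r) - (r ^ 2 + r + 1) ≠ 0 := hD0
    rw [div_pow, div_eq_iff (pow_ne_zero 2 hD1), sub_mul (1:ℝ), mul_assoc (1 + 2 / r ^ 2), div_mul_cancel₀ _ (pow_ne_zero 2 hD1)]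
    field_simp
    ring
  · intro r hr
    constructor
    · exact div_pos (hNpos r hr) (hDpos r hr)
    · exact (div_lt_one (hDpos r hr)).mpr (hDN r hr)
  · apply tendsto_of_tendsto_of_tendsto_of_le_of_le'
      (tendsto_const_nhds : Tendsto (fun _ : ℝ => (0:ℝ)) (nhdsWithin 0 (Ioi 0)) (nhds 0))
      ((continuous_id.tendsto 0).mono_left nhdsWithin_le_nhds)
    · filter_upwards [eventually_mem_nhdsWithin] with r (hr : r ∈ Ioi 0)
      exact le_of_lt (div_pos (hNpos r hr) (hDpos r hr))
    · filter_upwards [eventually_mem_nhdsWithin] with r (hr : r ∈ Ioi 0)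
      show N r / D r ≤ r
      rw [div_le_iff₀ (hDpos r hr)]
      exact hNr r hr
end

section
/- The nonnegative solution of the singular Riccati equation vanishing at the origin is unique: if y₁, y₂ : (0,a) → ℝ are differentiable, satisfy yᵢ'(r) = 1 − (1 + 2/r²)·yᵢ(r)² and yᵢ(r) ≥ 0 for all r ∈ (0,a), and yᵢ(r) → 0 as r → 0⁺ for i = 1,2, then y₁ = y₂ on (0,a). -/
open Set Filter

/-- Uniqueness of the nonnegative solution, vanishing at the origin, of the singular Riccati
equation `y' = 1 - (1 + 2/r²) y²` on an interval `(0, a)`. -/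
theorem riccati_solution_unique (a : ℝ) (y₁ y₂ : ℝ → ℝ)
    (h₁ : ∀ r ∈ Ioo (0 : ℝ) a, HasDerivAt y₁ (1 - (1 + 2 / r ^ 2) * y₁ r ^ 2) r)
    (h₁nn : ∀ r ∈ Ioo (0 : ℝ) a, 0 ≤ y₁ r)
    (h₁lim : Tendsto y₁ (nhdsWithin 0 (Ioi 0)) (nhds 0))
    (h₂ : ∀ r ∈ Ioo (0 : ℝ) a, HasDerivAt y₂ (1 - (1 + 2 / r ^ 2) * y₂ r ^ 2) r)
    (h₂nn : ∀ r ∈ Ioo (0 : ℝ) a, 0 ≤ y₂ r)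
    (h₂lim : Tendsto y₂ (nhdsWithin 0 (Ioi 0)) (nhds 0)) :
    EqOn y₁ y₂ (Ioo 0 a) := by
  set W : ℝ → ℝ := fun r => (y₁ r - y₂ r) ^ 2 with hWdef
  have hWderiv : ∀ r ∈ Ioo (0 : ℝ) a, HasDerivAt W
      (2 * (y₁ r - y₂ r) ^ 1 *
        ((1 - (1 + 2 / r ^ 2) * y₁ r ^ 2) - (1 - (1 + 2 / r ^ 2) * y₂ r ^ 2))) r := by
    intro r hr
    exact ((h₁ r hr).sub (h₂ r hr)).pow 2
  have hWnonpos : ∀ r ∈ Ioo (0 : ℝ) a, deriv W r ≤ 0 := by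
    intro r hr
    rw [(hWderiv r hr).deriv]
    have hc : (0 : ℝ) ≤ 2 / r ^ 2 := by positivity
    nlinarith [h₁nn r hr, h₂nn r hr, sq_nonneg (y₁ r - y₂ r),
      mul_nonneg hc (sq_nonneg (y₁ r - y₂ r)),
      mul_nonneg (mul_nonneg hc (sq_nonneg (y₁ r - y₂ r))) (add_nonneg (h₁nn r hr) (h₂nn r hr)),
      mul_nonneg (sq_nonneg (y₁ r - y₂ r)) (add_nonneg (h₁nn r hr) (h₂nn r hr))]
  have hWcont : ContinuousOn W (Ioo 0 a) := fun r hr =>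
    ((hWderiv r hr).continuousAt).continuousWithinAt
  have hanti : AntitoneOn W (Ioo 0 a) := by
    apply antitoneOn_of_deriv_nonpos (convex_Ioo 0 a) hWcont
    · intro x hx
      rw [interior_Ioo] at hx
      exact (hWderiv x hx).differentiableAt.differentiableWithinAt
    · intro x hx
      exact hWnonpos x (by rwa [interior_Ioo] at hx)
  have hWlim : Tendsto W (nhdsWithin 0 (Ioi 0)) (nhds 0) := by
    have : Tendsto (fun r => (y₁ r - y₂ r) ^ 2) (nhdsWithin 0 (Ioi 0)) (nhds ((0 - 0) ^ 2)) :=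
      (h₁lim.sub h₂lim).pow 2
    simpa using this
  intro r hr
  have hWr : W r ≤ 0 := by
    refine ge_of_tendsto hWlim ?_
    filter_upwards [Ioo_mem_nhdsGT_of_mem (by exact ⟨le_refl 0, hr.1⟩ : (0:ℝ) ∈ Ico 0 r)]
      with s hs
    exact hanti ⟨hs.1, hs.2.trans hr.2⟩ hr hs.2.le
  have : (y₁ r - y₂ r) ^ 2 = 0 := le_antisymm hWr (sq_nonneg _)
  have h0 : y₁ r - y₂ r = 0 := by
    exact pow_eq_zero_iff (two_ne_zero) |>.mp this
  linarith
end

section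
/- Let y₀ be the unique nonnegative solution on (0,∞) of y₀'(r) = 1 − (1 + 2/r²)·y₀(r)² with y₀(r) → 0 as r → 0⁺. Then y₀(r)/r → 1/2 as r → 0⁺ (equivalently, y₀ extends to 0 with derivative 1/2 at 0). -/
open Set Filter

private lemma eventually_left_gt {f : ℝ → ℝ} {m d : ℝ} (hf : HasDerivAt f d m) (hd : d < 0) :
    ∀ᶠ r in nhdsWithin m (Iio m), f m < f r := by
  have h1 := hasDerivAt_iff_tendsto_slope.mp hf
  have h2 : ∀ᶠ r in nhdsWithin m {m}ᶜ, slope f m r < 0 := h1.eventually_lt_const hd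
  have h3 : nhdsWithin m (Iio m) ≤ nhdsWithin m {m}ᶜ :=
    nhdsWithin_mono _ (fun x hx => ne_of_lt hx)
  filter_upwards [h3 h2, self_mem_nhdsWithin] with r hr hrm
  have hrm' : r < m := hrm
  rw [slope_def_field] at hr
  rcases div_neg_iff.mp hr with ⟨h, h'⟩ | ⟨h, h'⟩
  · linarith
  · linarith

private lemma eventually_right_gt {f : ℝ → ℝ} {m d : ℝ} (hf : HasDerivAt f d m) (hd : 0 < d) :
    ∀ᶠ r in nhdsWithin m (Ioi m), f m < f r := by
  have h1 := hasDerivAt_iff_tendsto_slope.mp hf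
  have h2 : ∀ᶠ r in nhdsWithin m {m}ᶜ, 0 < slope f m r := h1.eventually_const_lt hd
  have h3 : nhdsWithin m (Ioi m) ≤ nhdsWithin m {m}ᶜ :=
    nhdsWithin_mono _ (fun x hx => (ne_of_gt hx))
  filter_upwards [h3 h2, self_mem_nhdsWithin] with r hr hrm
  have hrm' : m < r := hrm
  rw [slope_def_field] at hr
  rcases div_pos_iff.mp hr with ⟨h, h'⟩ | ⟨h, h'⟩
  · linarith
  · linarith

private lemma riccati_upper (y₀ : ℝ → ℝ)
    (hode : ∀ r : ℝ, 0 < r → HasDerivAt y₀ (1 - (1 + 2 / r ^ 2) * y₀ r ^ 2) r)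
    (hlim : Tendsto y₀ (nhdsWithin 0 (Ioi 0)) (nhds 0)) :
    ∀ r : ℝ, 0 < r → y₀ r ≤ r / 2 := by
  have hcont : ∀ r : ℝ, 0 < r → ContinuousAt y₀ r := fun r hr => (hode r hr).continuousAt
  by_contra hcon
  push_neg at hcon
  obtain ⟨r₀, hr₀, hy₀⟩ := hcon
  set c := y₀ r₀ - r₀ / 2 with hc
  have hcpos : 0 < c := by simp only [hc]; linarith
  clear_value c
  have claim : ∀ r, 0 < r → r ≤ r₀ → c ≤ y₀ r - r / 2 := by
    intro r hr hrr₀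
    by_contra hlt
    push_neg at hlt
    have hrne : r ≠ r₀ := by intro h; rw [h] at hlt; simp only [hc] at hlt; linarith
    have hrlt : r < r₀ := lt_of_le_of_ne hrr₀ hrne
    set A := {s : ℝ | s ∈ Icc r r₀ ∧ c ≤ y₀ s - s / 2} with hA
    have hr₀A : r₀ ∈ A := ⟨⟨le_of_lt hrlt, le_refl _⟩, le_of_eq hc⟩
    have hAne : A.Nonempty := ⟨r₀, hr₀A⟩
    have hAbdd : BddBelow A := ⟨r, fun s hs => hs.1.1⟩
    set m := sInf A with hm
    have hmcl : m ∈ closure A := csInf_mem_closure hAne hAbdd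
    have hmr : r ≤ m := le_csInf hAne (fun s hs => hs.1.1)
    have hmr₀ : m ≤ r₀ := csInf_le hAbdd hr₀A
    have hmpos : 0 < m := lt_of_lt_of_le hr hmr
    have hgc : ContinuousAt (fun s => y₀ s - s / 2) m :=
      (hcont m hmpos).sub (continuousAt_id.div_const 2)
    have hne : (nhdsWithin m A).NeBot := mem_closure_iff_nhdsWithin_neBot.mp hmcl
    have hcm : c ≤ y₀ m - m / 2 := by
      refine ge_of_tendsto (f := fun s => y₀ s - s / 2)
        (hgc.continuousWithinAt (s := A)).tendsto ?_
      exact eventually_of_mem self_mem_nhdsWithin (fun s hs => hs.2)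
    have hrm : r < m := by
      rcases lt_or_eq_of_le hmr with h | h
      · exact h
      · exfalso; rw [← h] at hcm; linarith
    have hym : m / 2 < y₀ m := by linarith
    have hd : 1 - (1 + 2 / m ^ 2) * y₀ m ^ 2 - 1 / 2 < 0 := by
      have hm2 : (0:ℝ) < m ^ 2 := by positivity
      have h2 : (1:ℝ) / 2 < 2 / m ^ 2 * y₀ m ^ 2 := by
        rw [div_mul_eq_mul_div, lt_div_iff₀ hm2]; nlinarith
      nlinarith [sq_nonneg (y₀ m)]
    have hφ : HasDerivAt (fun s => y₀ s - s / 2) (1 - (1 + 2 / m ^ 2) * y₀ m ^ 2 - 1 / 2) m := by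
      have := (hode m hmpos).sub ((hasDerivAt_id m).div_const 2)
      exact this
    have hev := eventually_left_gt hφ hd
    have hico : Ico r m ∈ nhdsWithin m (Iio m) := Ico_mem_nhdsLT_of_mem ⟨hrm, le_refl m⟩
    have hFalse : ∀ᶠ s in nhdsWithin m (Iio m), False := by
      filter_upwards [hev, eventually_of_mem hico (fun x hx => hx)] with s hs hsmem
      have hsA : s ∈ A := ⟨⟨hsmem.1, le_of_lt (lt_of_lt_of_le hsmem.2 hmr₀)⟩, by linarith⟩
      have := csInf_le hAbdd hsA
      rw [← hm] at this
      linarith [hsmem.2]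
    obtain ⟨s, hs⟩ := hFalse.exists
    exact hs
  have h1 : ∀ᶠ r in nhdsWithin 0 (Ioi 0), y₀ r < c := hlim.eventually_lt_const hcpos
  have h2 : Ioo (0:ℝ) r₀ ∈ nhdsWithin 0 (Ioi 0) := Ioo_mem_nhdsGT_of_mem ⟨le_refl 0, hr₀⟩
  obtain ⟨s, hs1, hs2⟩ := (h1.and (eventually_of_mem h2 (fun x hx => hx))).exists
  have h3 := claim s hs2.1 (le_of_lt hs2.2)
  have h4 : 0 < s := hs2.1
  linarith

set_option maxHeartbeats 1000000 in
private lemma riccati_lower (y₀ : ℝ → ℝ)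
    (hode : ∀ r : ℝ, 0 < r → HasDerivAt y₀ (1 - (1 + 2 / r ^ 2) * y₀ r ^ 2) r)
    (hnn : ∀ r : ℝ, 0 < r → 0 ≤ y₀ r)
    (hA : ∀ r : ℝ, 0 < r → y₀ r ≤ r / 2) :
    ∀ ε : ℝ, 0 < ε → ε < 1/2 → ∀ r₀ : ℝ, 0 < r₀ → r₀ ^ 2 ≤ ε → 1/2 - ε ≤ y₀ r₀ / r₀ := by
  have hcont : ∀ r : ℝ, 0 < r → ContinuousAt y₀ r := fun r hr => (hode r hr).continuousAt
  have hgnn : ∀ r : ℝ, 0 < r → 0 ≤ y₀ r / r := fun r hr => div_nonneg (hnn r hr) hr.le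
  intro ε hε hε2 r₀ hr₀ hr₀ε
  by_contra hcon
  push_neg at hcon
  -- Stage 1 : g < 1/2 - ε on (0, r₀]
  have stage1 : ∀ r, 0 < r → r ≤ r₀ → y₀ r / r < 1/2 - ε := by
    intro r hr hrr₀
    by_contra hge
    push_neg at hge
    have hrne : r ≠ r₀ := by intro h; rw [h] at hge; linarith
    have hrlt : r < r₀ := lt_of_le_of_ne hrr₀ hrne
    set B := {s : ℝ | s ∈ Icc r r₀ ∧ 1/2 - ε ≤ y₀ s / s} with hB
    have hrB : r ∈ B := ⟨⟨le_refl r, hrr₀⟩, hge⟩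
    have hBne : B.Nonempty := ⟨r, hrB⟩
    have hBbdd : BddAbove B := ⟨r₀, fun s hs => hs.1.2⟩
    set m := sSup B with hm
    have hmcl : m ∈ closure B := csSup_mem_closure hBne hBbdd
    have hrm : r ≤ m := le_csSup hBbdd hrB
    have hmr₀ : m ≤ r₀ := csSup_le hBne (fun s hs => hs.1.2)
    have hmpos : 0 < m := lt_of_lt_of_le hr hrm
    have hgct : ContinuousAt (fun s => y₀ s / s) m :=
      (hcont m hmpos).div continuousAt_id (ne_of_gt hmpos)
    have hne : (nhdsWithin m B).NeBot := mem_closure_iff_nhdsWithin_neBot.mp hmcl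
    have hgm_ge : 1/2 - ε ≤ y₀ m / m := by
      refine ge_of_tendsto (f := fun s => y₀ s / s) (hgct.continuousWithinAt (s := B)).tendsto ?_
      exact eventually_of_mem self_mem_nhdsWithin (fun s hs => hs.2)
    have hmlt : m < r₀ := by
      rcases lt_or_eq_of_le hmr₀ with h | h
      · exact h
      · exfalso; rw [h] at hgm_ge; linarith
    have hgt : ∀ s, m < s → s ≤ r₀ → y₀ s / s < 1/2 - ε := by
      intro s hms hsr₀
      by_contra h
      push_neg at h
      have hsB : s ∈ B := ⟨⟨le_trans hrm hms.le, hsr₀⟩, h⟩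
      have := le_csSup hBbdd hsB
      rw [← hm] at this
      linarith
    have hioc : Ioc m r₀ ∈ nhdsWithin m (Ioi m) := Ioc_mem_nhdsGT_of_mem ⟨le_refl m, hmlt⟩
    have hgm_le : y₀ m / m ≤ 1/2 - ε := by
      have htd : Tendsto (fun s => y₀ s / s) (nhdsWithin m (Ioi m)) (nhds (y₀ m / m)) :=
        hgct.tendsto.mono_left nhdsWithin_le_nhds
      refine le_of_tendsto htd ?_
      filter_upwards [hioc] with s hs
      exact (hgt s hs.1 hs.2).le
    have hgm : y₀ m / m = 1/2 - ε := le_antisymm hgm_le hgm_ge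
    have hyval : y₀ m = (1/2 - ε) * m := by
      rw [div_eq_iff (ne_of_gt hmpos)] at hgm; exact hgm
    have hg' : HasDerivAt (fun s => y₀ s / s)
        (((1 - (1 + 2 / m ^ 2) * y₀ m ^ 2) * m - y₀ m * 1) / m ^ 2) m :=
      (hode m hmpos).div (hasDerivAt_id m) (ne_of_gt hmpos)
    have hm2 : (0:ℝ) < m ^ 2 := by positivity
    have hmε : m ^ 2 < ε := by nlinarith
    have hDpos : 0 < ((1 - (1 + 2 / m ^ 2) * y₀ m ^ 2) * m - y₀ m * 1) / m ^ 2 := by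
      apply div_pos ?_ hm2
      rw [hyval]
      have hkey : (1 + 2 / m ^ 2) * ((1/2 - ε) * m) ^ 2 = (m ^ 2 + 2) * (1/2 - ε) ^ 2 := by
        field_simp
      rw [hkey]
      have hb : (m ^ 2 + 2) * (1/2 - ε) ^ 2 < 1/2 + ε := by
        nlinarith [mul_le_mul_of_nonneg_right hmε.le (sq_nonneg (1/2 - ε)),
          mul_pos hε hε, mul_lt_mul_of_pos_left hε2 hε]
      nlinarith [mul_pos hmpos (show (0:ℝ) < 1/2 + ε - (m ^ 2 + 2) * (1/2 - ε) ^ 2 by linarith)]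
    have hev := eventually_right_gt hg' hDpos
    obtain ⟨s, hs1, hs2⟩ := (hev.and (eventually_of_mem hioc (fun x hx => hx))).exists
    have h5 := hgt s hs2.1 hs2.2
    rw [hgm] at hs1
    linarith
  -- Stage 2 : monotonicity of ψ r = g r - ε log r
  set ψ := fun r : ℝ => y₀ r / r - ε * Real.log r with hψ
  have hψmono : StrictMonoOn ψ (Ioc 0 r₀) := by
    apply strictMonoOn_of_deriv_pos (convex_Ioc 0 r₀)
    · intro x hx
      exact (((hcont x hx.1).div continuousAt_id (ne_of_gt hx.1)).sub
        ((Real.continuousAt_log (ne_of_gt hx.1)).const_mul ε)).continuousWithinAt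
    · intro x hx
      rw [interior_Ioc] at hx
      obtain ⟨hx0, hxr₀⟩ := hx
      have hderg : HasDerivAt (fun s => y₀ s / s)
          (((1 - (1 + 2 / x ^ 2) * y₀ x ^ 2) * x - y₀ x * 1) / x ^ 2) x :=
        (hode x hx0).div (hasDerivAt_id x) (ne_of_gt hx0)
      have hderψ : HasDerivAt ψ
          (((1 - (1 + 2 / x ^ 2) * y₀ x ^ 2) * x - y₀ x * 1) / x ^ 2 - ε * x⁻¹) x :=
        hderg.sub ((Real.hasDerivAt_log (ne_of_gt hx0)).const_mul ε)
      rw [hderψ.deriv]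
      have hx2 : (0:ℝ) < x ^ 2 := by positivity
      have hxε : x ^ 2 < ε := by nlinarith
      have hglt : y₀ x / x < 1/2 - ε := stage1 x hx0 hxr₀.le
      have hylt : y₀ x < (1/2 - ε) * x := by rwa [div_lt_iff₀ hx0] at hglt
      have hynn : 0 ≤ y₀ x := hnn x hx0
      have hrw : ((1 - (1 + 2 / x ^ 2) * y₀ x ^ 2) * x - y₀ x * 1) / x ^ 2 - ε * x⁻¹
          = (x ^ 2 - y₀ x ^ 2 * x ^ 2 - 2 * y₀ x ^ 2 - y₀ x * x - ε * x ^ 2) / (x ^ 2 * x) := by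
        field_simp
        ring
      rw [hrw]
      apply div_pos ?_ (by positivity)
      have hyle : y₀ x ≤ x / 2 := hA x hx0
      have h1' : y₀ x * x < (1/2 - ε) * x ^ 2 := by nlinarith [mul_lt_mul_of_pos_right hylt hx0]
      have h2' : y₀ x ^ 2 ≤ x ^ 2 / 4 := by nlinarith
      have h3a : y₀ x ^ 2 * x ^ 2 ≤ x ^ 2 / 4 * x ^ 2 := mul_le_mul_of_nonneg_right h2' hx2.le
      have h3b : x ^ 2 * x ^ 2 ≤ ε * x ^ 2 := mul_le_mul_of_nonneg_right hxε.le hx2.le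
      have h3' : y₀ x ^ 2 * x ^ 2 ≤ ε / 4 * x ^ 2 := by linarith
      have h4a : y₀ x * y₀ x ≤ ((1/2 - ε) * x) * ((1/2 - ε) * x) :=
        mul_self_le_mul_self hynn hylt.le
      have h4' : y₀ x ^ 2 ≤ (1/2 - ε) ^ 2 * x ^ 2 := by nlinarith [h4a]
      have h5' : 0 < (7/4 * ε - 2 * ε ^ 2) * x ^ 2 := by
        apply mul_pos ?_ hx2
        nlinarith
      nlinarith [h1', h3', h4', h5']
  -- Stage 3 : contradiction
  have key : ∀ s, 0 < s → s < r₀ → y₀ s / s - ε * Real.log s ≤ y₀ r₀ / r₀ - ε * Real.log r₀ := by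
    intro s hs hsr
    exact (hψmono ⟨hs, hsr.le⟩ ⟨hr₀, le_refl _⟩ hsr).le
  set C := y₀ r₀ / r₀ - ε * Real.log r₀ with hC
  set t := -(C + 1) / ε with ht
  set r := min (r₀ / 2) (Real.exp t) with hr
  have hrpos : 0 < r := lt_min (by linarith) (Real.exp_pos t)
  have hrlt : r < r₀ := lt_of_le_of_lt (min_le_left _ _) (by linarith)
  have h1 := key r hrpos hrlt
  have hlog : Real.log r ≤ t := by
    rw [← Real.log_exp t]
    exact Real.log_le_log hrpos (min_le_right _ _)
  have h4 : ε * Real.log r ≤ ε * t := mul_le_mul_of_nonneg_left hlog hε.le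
  have hεt : ε * t = -(C + 1) := by rw [ht]; field_simp
  clear_value C t r
  have h5 : y₀ r / r ≤ -1 := by linarith
  linarith [hgnn r hrpos]

/-- The unique nonnegative solution `y₀` of `y₀' = 1 - (1 + 2/r²) y₀²` on `(0, ∞)` with
`y₀(r) → 0` as `r → 0⁺` satisfies `y₀(r)/r → 1/2` as `r → 0⁺`. -/
theorem riccati_solution_deriv_at_zero (y₀ : ℝ → ℝ)
    (hode : ∀ r : ℝ, 0 < r → HasDerivAt y₀ (1 - (1 + 2 / r ^ 2) * y₀ r ^ 2) r)
    (hnn : ∀ r : ℝ, 0 < r → 0 ≤ y₀ r)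
    (hlim : Tendsto y₀ (nhdsWithin 0 (Ioi 0)) (nhds 0)) :
    Tendsto (fun r => y₀ r / r) (nhdsWithin 0 (Ioi 0)) (nhds (1 / 2)) := by
  have hA := riccati_upper y₀ hode hlim
  have hB := riccati_lower y₀ hode hnn hA
  rw [Metric.tendsto_nhdsWithin_nhds]
  intro ε hε
  set ε' := min (ε / 2) (1 / 4) with hε'
  have hε'pos : 0 < ε' := lt_min (by linarith) (by norm_num)
  have hε'lt : ε' < 1 / 2 := lt_of_le_of_lt (min_le_right _ _) (by norm_num)
  have hε'ε : ε' < ε := lt_of_le_of_lt (min_le_left _ _) (by linarith)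
  refine ⟨Real.sqrt ε', Real.sqrt_pos.mpr hε'pos, ?_⟩
  intro x hx hdist
  have hx0 : 0 < x := hx
  rw [Real.dist_eq] at hdist ⊢
  rw [sub_zero, abs_of_pos hx0] at hdist
  have hx2 : x ^ 2 ≤ ε' := by
    nlinarith [Real.sq_sqrt hε'pos.le, Real.sqrt_nonneg ε']
  have hlow := hB ε' hε'pos hε'lt x hx0 hx2
  have hup : y₀ x / x ≤ 1 / 2 := by
    rw [div_le_iff₀ hx0]
    linarith [hA x hx0]
  rw [abs_lt]
  constructor <;> linarith
end

section
/- Let y₀ be the unique nonnegative solution on (0,∞) of y₀'(r) = 1 − (1 + 2/r²)·y₀(r)² with y₀(r) → 0 as r → 0⁺. Then y₀(r) < 1 for all r > 0 and y₀(r) → 1 as r → ∞. -/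
open Set Filter

/-- If `f a < c ≤ f b` and the derivative of `f` is negative at every point of `(a, b]`
where `f = c`, we get a contradiction (at the first crossing the derivative would have to
be nonnegative). -/
lemma riccati_no_crossing {f f' : ℝ → ℝ} {a b c : ℝ} (hab : a ≤ b)
    (hd : ∀ x ∈ Icc a b, HasDerivAt f (f' x) x)
    (hfa : f a < c) (hfb : c ≤ f b)
    (hneg : ∀ s ∈ Ioc a b, f s = c → f' s < 0) : False := by
  have hcont : ContinuousOn f (Icc a b) := fun x hx =>
    ((hd x hx).continuousAt).continuousWithinAt
  set S : Set ℝ := Icc a b ∩ f ⁻¹' (Ici c) with hSdef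
  have hSne : S.Nonempty := ⟨b, ⟨hab, le_rfl⟩, hfb⟩
  have hSclosed : IsClosed S :=
    hcont.preimage_isClosed_of_isClosed isClosed_Icc isClosed_Ici
  have hSbdd : BddBelow S := ⟨a, fun x hx => hx.1.1⟩
  set s := sInf S with hs_def
  have hsS : s ∈ S := hSclosed.csInf_mem hSne hSbdd
  have hsab : s ∈ Icc a b := hsS.1
  have hsc : c ≤ f s := hsS.2
  have has : a < s := by
    rcases lt_or_eq_of_le hsab.1 with h | h
    · exact h
    · exfalso; rw [← h] at hsc; linarith
  -- all points in [a, s) have f < c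
  have hlt : ∀ r ∈ Ico a s, f r < c := by
    intro r hr
    by_contra hge
    push_neg at hge
    have hrS : r ∈ S := ⟨⟨hr.1, hr.2.le.trans hsab.2⟩, hge⟩
    exact absurd (csInf_le hSbdd hrS) (not_le.2 hr.2)
  -- the left filter at s
  have hne : (nhdsWithin s (Ico a s)).NeBot := by
    rw [← mem_closure_iff_nhdsWithin_neBot, closure_Ico has.ne]
    exact ⟨has.le, le_rfl⟩
  -- f s ≤ c by left continuity
  have hfs_le : f s ≤ c := by
    have htend : Tendsto f (nhdsWithin s (Ico a s)) (nhds (f s)) :=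
      ((hd s hsab).continuousAt).continuousWithinAt.tendsto
    refine le_of_tendsto htend ?_
    filter_upwards [self_mem_nhdsWithin] with r hr
    exact (hlt r hr).le
  have hfs : f s = c := le_antisymm hfs_le hsc
  have hderiv_neg : f' s < 0 := hneg s ⟨has, hsab.2⟩ hfs
  -- slope tends to f' s < 0 from the left, so f r > f s = c for r < s near s
  have hslope : Tendsto (slope f s) (nhdsWithin s (Ico a s)) (nhds (f' s)) := by
    refine (hasDerivAt_iff_tendsto_slope.1 (hd s hsab)).mono_left ?_
    exact nhdsWithin_mono s (fun r hr => ne_of_lt hr.2)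
  have hev : ∀ᶠ r in nhdsWithin s (Ico a s), slope f s r < 0 :=
    hslope.eventually_lt_const hderiv_neg
  obtain ⟨r, hrslope, hr⟩ := (hev.and self_mem_nhdsWithin).exists
  rw [slope_def_field] at hrslope
  have hrs : r - s < 0 := sub_neg.2 hr.2
  have hfr : f s < f r := by
    rcases div_neg_iff.1 hrslope with ⟨h1, h2⟩ | ⟨h1, h2⟩
    · linarith
    · linarith
  have := hlt r hr
  linarith [hfs]

/-- The unique nonnegative solution `y₀` of `y₀' = 1 - (1 + 2/r²) y₀²` on `(0, ∞)` with
`y₀(r) → 0` as `r → 0⁺` satisfies `y₀(r) < 1` for all `r > 0` and `y₀(r) → 1` as `r → ∞`. -/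
theorem riccati_solution_lt_one_tendsto_one (y₀ : ℝ → ℝ)
    (hode : ∀ r : ℝ, 0 < r → HasDerivAt y₀ (1 - (1 + 2 / r ^ 2) * y₀ r ^ 2) r)
    (hnn : ∀ r : ℝ, 0 < r → 0 ≤ y₀ r)
    (hlim : Tendsto y₀ (nhdsWithin 0 (Ioi 0)) (nhds 0)) :
    (∀ r : ℝ, 0 < r → y₀ r < 1) ∧ Tendsto y₀ atTop (nhds 1) := by
  set F : ℝ → ℝ := fun r => 1 - (1 + 2 / r ^ 2) * y₀ r ^ 2 with hF
  -- Part 1 : y₀ < 1 on (0, ∞)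
  have h1 : ∀ r : ℝ, 0 < r → y₀ r < 1 := by
    intro r₀ hr₀
    by_contra hge
    push_neg at hge
    -- find a small point where y₀ < 1
    have hev : ∀ᶠ a in nhdsWithin (0:ℝ) (Ioi 0), y₀ a < 1 ∧ a ∈ Ioo (0:ℝ) r₀ := by
      refine (hlim.eventually_lt_const one_pos).and ?_
      exact mem_of_superset (Ioo_mem_nhdsGT_of_mem ⟨le_rfl, hr₀⟩) (fun x hx => hx)
    obtain ⟨a, ha1, ha2⟩ := hev.exists
    refine riccati_no_crossing (f := y₀) (f' := F) ha2.2.le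
      (fun x hx => hode x (lt_of_lt_of_le ha2.1 hx.1)) ha1 hge ?_
    intro s hs hys
    have hs0 : 0 < s := lt_trans ha2.1 hs.1
    have h2s : (0:ℝ) < 2 / s ^ 2 := by positivity
    simp only [hF, hys]
    nlinarith
  refine ⟨h1, ?_⟩
  -- Part 2 : y₀ → 1 at infinity
  rw [tendsto_order]
  constructor
  swap
  · intro b hb
    filter_upwards [eventually_gt_atTop 0] with r hr
    exact (h1 r hr).trans hb
  intro b hb
  set c : ℝ := max b 0 with hc
  have hc0 : 0 ≤ c := le_max_right b 0
  have hc1 : c < 1 := max_lt hb one_pos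
  set ε : ℝ := 1 - c with hε
  have hεpos : 0 < ε := by simp only [hε]; linarith
  have hε1 : ε ≤ 1 := by simp only [hε]; linarith
  -- choose R₀ with 2/r² < ε/2 for r ≥ R₀, and R₀ ≥ 1
  have h2r : Tendsto (fun r : ℝ => 2 / r ^ 2) atTop (nhds 0) := by
    have h := (tendsto_pow_atTop (two_ne_zero)).inv_tendsto_atTop (𝕜 := ℝ)
    have h2 := h.const_mul 2
    simp only [mul_zero] at h2
    simpa [div_eq_mul_inv] using h2
  obtain ⟨R₀, hR₀⟩ := eventually_atTop.1
    ((h2r.eventually_lt_const (half_pos hεpos)).and (eventually_ge_atTop 1))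
  have hR₀pos : (0:ℝ) < R₀ := lt_of_lt_of_le one_pos (hR₀ R₀ le_rfl).2
  -- key derivative bound: if y₀ s ≤ c and s ≥ R₀ then F s ≥ ε/2
  have key : ∀ s : ℝ, R₀ ≤ s → y₀ s ≤ c → ε / 2 ≤ F s := by
    intro s hs hy
    obtain ⟨h2, h1s⟩ := hR₀ s hs
    have hs0 : 0 < s := lt_of_lt_of_le one_pos h1s
    have hys0 : 0 ≤ y₀ s := hnn s hs0
    have h2s : (0:ℝ) < 2 / s ^ 2 := by positivity
    have hsq : y₀ s ^ 2 ≤ c ^ 2 := by nlinarith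
    have hsq1 : y₀ s ^ 2 ≤ 1 := by nlinarith
    simp only [hF]
    have hεc : 1 - c ^ 2 ≥ ε := by simp only [hε]; nlinarith
    nlinarith [mul_le_of_le_one_right (le_of_lt h2s) hsq1]
  -- Claim B: some point r₁ ≥ R₀ has y₀ r₁ > c
  have hB : ∃ r₁ : ℝ, R₀ ≤ r₁ ∧ c < y₀ r₁ := by
    by_contra h
    push_neg at h
    have hcont : ContinuousOn y₀ (Ici R₀) := fun x hx =>
      ((hode x (lt_of_lt_of_le hR₀pos hx)).continuousAt).continuousWithinAt
    have hdiff : DifferentiableOn ℝ y₀ (interior (Ici R₀)) := by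
      rw [interior_Ici]
      exact fun x hx =>
        ((hode x (lt_trans hR₀pos hx)).differentiableAt).differentiableWithinAt
    have hbound : ∀ x ∈ interior (Ici R₀), ε / 2 ≤ deriv y₀ x := by
      intro x hx
      rw [interior_Ici] at hx
      rw [(hode x (lt_trans hR₀pos hx)).deriv]
      exact key x hx.le (h x hx.le)
    have hX : R₀ ≤ R₀ + 4 / ε := by
      have : (0:ℝ) < 4 / ε := by positivity
      linarith
    have hmvt := (convex_Ici R₀).mul_sub_le_image_sub_of_le_deriv hcont hdiff hbound
      R₀ self_mem_Ici (R₀ + 4 / ε) hX hX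
    have hcalc : ε / 2 * (R₀ + 4 / ε - R₀) = 2 := by
      field_simp
      ring
    rw [hcalc] at hmvt
    have hlt1 : y₀ (R₀ + 4 / ε) < 1 := h1 _ (lt_of_lt_of_le hR₀pos hX)
    have hge0 : 0 ≤ y₀ R₀ := hnn R₀ hR₀pos
    linarith
  obtain ⟨r₁, hr₁R, hr₁⟩ := hB
  -- Claim C: y₀ > c for all r ≥ r₁
  have hC : ∀ r : ℝ, r₁ ≤ r → c < y₀ r := by
    intro r₂ h12
    by_contra h
    push_neg at h
    refine riccati_no_crossing (f := fun r => -(y₀ r)) (f' := fun r => -(F r)) (c := -c)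
      h12 ?_ (by simpa using hr₁) (by simpa using h) ?_
    · intro x hx
      exact (hode x (lt_of_lt_of_le (lt_of_lt_of_le hR₀pos hr₁R) hx.1)).neg
    · intro s hs hys
      have hsR : R₀ ≤ s := hr₁R.trans hs.1.le
      have hysc : y₀ s = c := by simpa using hys
      have := key s hsR hysc.le
      exact neg_lt_zero.2 ((half_pos hεpos).trans_le this)
  filter_upwards [eventually_ge_atTop r₁] with r hr
  exact lt_of_le_of_lt (le_max_left b 0) (hC r hr)
end

section
/- Let y₀ be the unique nonnegative solution on (0,∞) of y₀'(r) = 1 − (1 + 2/r²)·y₀(r)² with y₀(r) → 0 as r → 0⁺. Then y₀'(r) > 0 for all r > 0; in particular y₀ is strictly increasing and maps (0,∞) bijectively onto (0,1). -/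
open Set Filter

/-- If `f` has negative derivative at `x`, then `f t > f x` for `t` slightly to the left. -/
private lemma riccati_left_gt_of_deriv_neg {f : ℝ → ℝ} {d x : ℝ}
    (h : HasDerivAt f d x) (hd : d < 0) : ∀ᶠ t in nhdsWithin x (Iio x), f x < f t := by
  have hs := hasDerivAt_iff_tendsto_slope.mp h
  have h2 : ∀ᶠ t in nhdsWithin x {x}ᶜ, slope f x t < 0 := hs.eventually_lt_const hd
  have h3 : nhdsWithin x (Iio x) ≤ nhdsWithin x {x}ᶜ :=
    nhdsWithin_mono x fun t ht => ne_of_lt ht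
  filter_upwards [h3 h2, self_mem_nhdsWithin] with t ht htx
  rw [slope_def_field] at ht
  rcases div_neg_iff.mp ht with ⟨h1, _⟩ | ⟨_, h2⟩
  · linarith
  · exfalso; have : t < x := htx; linarith

/-- Step 1: the quantity `(1 + 2/r²) y₀(r)²` never strictly exceeds 1. -/
private lemma riccati_aux_le_one (y₀ : ℝ → ℝ)
    (hode : ∀ r : ℝ, 0 < r → HasDerivAt y₀ (1 - (1 + 2 / r ^ 2) * y₀ r ^ 2) r)
    (hnn : ∀ r : ℝ, 0 < r → 0 ≤ y₀ r)
    (hlim : Tendsto y₀ (nhdsWithin 0 (Ioi 0)) (nhds 0)) :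
    ∀ r : ℝ, 0 < r → (1 + 2 / r ^ 2) * y₀ r ^ 2 ≤ 1 := by
  by_contra hbad
  push_neg at hbad
  obtain ⟨r₀, hr₀, hbad⟩ := hbad
  set c := y₀ r₀ with hc_def
  have hc : 0 < c := by
    rcases (hnn r₀ hr₀).eq_or_lt with h | h
    · exfalso
      have hc0 : c = 0 := h.symm
      rw [hc0] at hbad; norm_num at hbad
    · exact h
  -- Key claim: y₀ ≥ c on (0, r₀]
  have key : ∀ r₁ ∈ Ioo (0:ℝ) r₀, c ≤ y₀ r₁ := by
    intro r₁ hr₁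
    set C : Set ℝ := {t | t ∈ Icc r₁ r₀ ∧ ∀ u ∈ Icc t r₀, c ≤ y₀ u} with hC_def
    have hCr₀ : r₀ ∈ C := by
      refine ⟨⟨le_of_lt hr₁.2, le_refl _⟩, fun u hu => ?_⟩
      have : u = r₀ := le_antisymm hu.2 hu.1
      rw [this]
    have hne : C.Nonempty := ⟨r₀, hCr₀⟩
    have hbdd : BddBelow C := ⟨r₁, fun t ht => ht.1.1⟩
    set s := sInf C with hs_def
    have hs_ge : r₁ ≤ s := le_csInf hne fun t ht => ht.1.1
    have hs_le : s ≤ r₀ := csInf_le hbdd hCr₀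
    have hs_pos : 0 < s := lt_of_lt_of_le hr₁.1 hs_ge
    have hs_upper : ∀ u ∈ Ioc s r₀, c ≤ y₀ u := by
      intro u hu
      obtain ⟨t, htC, htu⟩ := exists_lt_of_csInf_lt hne hu.1
      exact htC.2 u ⟨le_of_lt htu, hu.2⟩
    have hys : c ≤ y₀ s := by
      rcases hs_le.eq_or_lt with h | h
      · rw [h]
      · have hcont : Tendsto y₀ (nhdsWithin s (Ioi s)) (nhds (y₀ s)) :=
          ((hode s hs_pos).continuousAt.continuousWithinAt).tendsto
        refine ge_of_tendsto hcont ?_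
        filter_upwards [Ioc_mem_nhdsGT h] with u hu
        exact hs_upper u hu
    have hsC : s ∈ C := by
      refine ⟨⟨hs_ge, hs_le⟩, fun u hu => ?_⟩
      rcases hu.1.eq_or_lt with h | h
      · rw [← h]; exact hys
      · exact hs_upper u ⟨h, hu.2⟩
    rcases hs_ge.eq_or_lt with heq | hlt
    · exact hsC.2 r₁ ⟨le_of_eq heq.symm, le_of_lt hr₁.2⟩
    · -- r₁ < s: derive a contradiction
      exfalso
      have hys2 : c ≤ y₀ s := hys
      have hd : 1 - (1 + 2 / s ^ 2) * y₀ s ^ 2 < 0 := by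
        have h1 : 2 / r₀ ^ 2 ≤ 2 / s ^ 2 := by
          apply div_le_div_of_nonneg_left (by norm_num) (by positivity)
          exact pow_le_pow_left₀ (le_of_lt hs_pos) hs_le 2
        have h2 : c ^ 2 ≤ y₀ s ^ 2 := by nlinarith
        nlinarith [mul_le_mul h1 h2 (by positivity) (by positivity)]
      have heve := riccati_left_gt_of_deriv_neg (hode s hs_pos) hd
      obtain ⟨a, ha, hsub⟩ := mem_nhdsLT_iff_exists_Ioo_subset.mp heve
      set t := max r₁ ((a + s) / 2) with ht_def
      have ht1 : t < s := max_lt hlt (by simp only [mem_Iio] at ha; linarith)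
      have hta : a < t := lt_of_lt_of_le (by simp only [mem_Iio] at ha; linarith)
        (le_max_right _ _)
      have htr₁ : r₁ ≤ t := le_max_left _ _
      have htC : t ∈ C := by
        refine ⟨⟨htr₁, le_trans ht1.le hs_le⟩, fun u hu => ?_⟩
        rcases lt_or_ge u s with h | h
        · have huA : u ∈ Ioo a s := ⟨lt_of_lt_of_le hta hu.1, h⟩
          have := hsub huA
          simp only [mem_setOf_eq] at this
          linarith
        · exact hsC.2 u ⟨h, hu.2⟩
      have : s ≤ t := csInf_le hbdd htC
      linarith
  -- now contradict the limit
  have h1 : ∀ᶠ r in nhdsWithin (0:ℝ) (Ioi 0), y₀ r < c := hlim.eventually_lt_const hc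
  have h2 : ∀ᶠ r in nhdsWithin (0:ℝ) (Ioi 0), r ∈ Ioi (0:ℝ) := self_mem_nhdsWithin
  have h3 : ∀ᶠ r in nhdsWithin (0:ℝ) (Ioi 0), r < r₀ :=
    eventually_nhdsWithin_of_eventually_nhds (eventually_lt_nhds hr₀)
  obtain ⟨r, hr1, hr2, hr3⟩ := (h1.and (h2.and h3)).exists
  have := key r ⟨hr2, hr3⟩
  linarith

/-- Step 2: the quantity `(1 + 2/r²) y₀(r)²` is strictly below 1. -/
private lemma riccati_aux_lt_one (y₀ : ℝ → ℝ)
    (hode : ∀ r : ℝ, 0 < r → HasDerivAt y₀ (1 - (1 + 2 / r ^ 2) * y₀ r ^ 2) r)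
    (hnn : ∀ r : ℝ, 0 < r → 0 ≤ y₀ r)
    (hlim : Tendsto y₀ (nhdsWithin 0 (Ioi 0)) (nhds 0)) :
    ∀ r : ℝ, 0 < r → (1 + 2 / r ^ 2) * y₀ r ^ 2 < 1 := by
  intro r₀ hr₀
  rcases (riccati_aux_le_one y₀ hode hnn hlim r₀ hr₀).lt_or_eq with h | heq
  · exact h
  exfalso
  set c := y₀ r₀ with hc_def
  have hc : 0 < c := by
    rcases (hnn r₀ hr₀).eq_or_lt with h | h
    · exfalso
      have hc0 : c = 0 := h.symm
      rw [hc0] at heq; norm_num at heq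
    · exact h
  have hd₀ : 1 - (1 + 2 / r₀ ^ 2) * y₀ r₀ ^ 2 = 0 := by rw [heq]; ring
  -- derivative of F r = (1 + 2/r²) y₀(r)²
  have hsq : HasDerivAt (fun t : ℝ => t ^ 2) (2 * r₀) r₀ := by
    simpa using hasDerivAt_pow 2 r₀
  have hinv : HasDerivAt (fun t : ℝ => (t ^ 2)⁻¹) (-(2 * r₀) / (r₀ ^ 2) ^ 2) r₀ :=
    hsq.inv (by positivity)
  have hg : HasDerivAt (fun t : ℝ => 1 + 2 / t ^ 2) (2 * (-(2 * r₀) / (r₀ ^ 2) ^ 2)) r₀ := by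
    have := (hinv.const_mul (2:ℝ)).const_add 1
    simpa [div_eq_mul_inv] using this
  have hy2 : HasDerivAt (fun t : ℝ => y₀ t ^ 2)
      ((2:ℕ) * y₀ r₀ ^ 1 * (1 - (1 + 2 / r₀ ^ 2) * y₀ r₀ ^ 2)) r₀ :=
    (hode r₀ hr₀).pow 2
  have hF : HasDerivAt (fun t : ℝ => (1 + 2 / t ^ 2) * y₀ t ^ 2)
      (2 * (-(2 * r₀) / (r₀ ^ 2) ^ 2) * y₀ r₀ ^ 2 +
        (1 + 2 / r₀ ^ 2) * ((2:ℕ) * y₀ r₀ ^ 1 * (1 - (1 + 2 / r₀ ^ 2) * y₀ r₀ ^ 2))) r₀ :=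
    hg.mul hy2
  have hDneg : 2 * (-(2 * r₀) / (r₀ ^ 2) ^ 2) * y₀ r₀ ^ 2 +
      (1 + 2 / r₀ ^ 2) * ((2:ℕ) * y₀ r₀ ^ 1 * (1 - (1 + 2 / r₀ ^ 2) * y₀ r₀ ^ 2)) < 0 := by
    rw [hd₀]
    have h1 : 0 < (2 * r₀) / (r₀ ^ 2) ^ 2 := by positivity
    have h2 : 0 < y₀ r₀ ^ 2 := by positivity
    have : 2 * (-(2 * r₀) / (r₀ ^ 2) ^ 2) * y₀ r₀ ^ 2 < 0 := by
      rw [neg_div]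
      nlinarith
    simpa using this
  have heve := riccati_left_gt_of_deriv_neg hF hDneg
  have heve2 : ∀ᶠ t in nhdsWithin r₀ (Iio r₀), (0:ℝ) < t :=
    eventually_nhdsWithin_of_eventually_nhds (eventually_gt_nhds hr₀)
  obtain ⟨t, ht1, ht2⟩ := (heve.and heve2).exists
  have hle := riccati_aux_le_one y₀ hode hnn hlim t ht2
  rw [← heq] at ht1
  linarith [heq ▸ ht1]

/-- The unique nonnegative solution `y₀` of `y₀' = 1 - (1 + 2/r²) y₀²` on `(0, ∞)` with
`y₀(r) → 0` as `r → 0⁺` has positive derivative on `(0, ∞)`; in particular it is strictly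
increasing and maps `(0, ∞)` bijectively onto `(0, 1)`. -/
theorem riccati_solution_strict_mono_bijective (y₀ : ℝ → ℝ)
    (hode : ∀ r : ℝ, 0 < r → HasDerivAt y₀ (1 - (1 + 2 / r ^ 2) * y₀ r ^ 2) r)
    (hnn : ∀ r : ℝ, 0 < r → 0 ≤ y₀ r)
    (hlim : Tendsto y₀ (nhdsWithin 0 (Ioi 0)) (nhds 0)) :
    (∀ r : ℝ, 0 < r → 0 < deriv y₀ r) ∧
    StrictMonoOn y₀ (Ioi 0) ∧
    BijOn y₀ (Ioi 0) (Ioo 0 1) := by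
  have hlt := riccati_aux_lt_one y₀ hode hnn hlim
  have hderiv : ∀ r : ℝ, 0 < r → deriv y₀ r = 1 - (1 + 2 / r ^ 2) * y₀ r ^ 2 :=
    fun r hr => (hode r hr).deriv
  have hdpos : ∀ r : ℝ, 0 < r → 0 < deriv y₀ r := by
    intro r hr
    rw [hderiv r hr]
    linarith [hlt r hr]
  have hcont : ContinuousOn y₀ (Ioi 0) :=
    fun r hr => ((hode r hr).continuousAt).continuousWithinAt
  have hmono : StrictMonoOn y₀ (Ioi 0) := by
    apply strictMonoOn_of_deriv_pos (convex_Ioi 0) hcont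
    rw [interior_Ioi]
    exact fun x hx => hdpos x hx
  have hpos : ∀ r : ℝ, 0 < r → 0 < y₀ r := by
    intro r hr
    have h1 : y₀ (r / 2) < y₀ r := hmono (by simp [mem_Ioi]; linarith) (mem_Ioi.mpr hr)
      (by linarith)
    linarith [hnn (r / 2) (by linarith)]
  have hlt1 : ∀ r : ℝ, 0 < r → y₀ r < 1 := by
    intro r hr
    have h1 := hlt r hr
    have h2 : 0 < 2 / r ^ 2 := by positivity
    nlinarith [hnn r hr]
  refine ⟨hdpos, hmono, ?_, hmono.injOn, ?_⟩
  · -- MapsTo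
    intro r hr
    exact ⟨hpos r hr, hlt1 r hr⟩
  · -- SurjOn
    intro v hv
    obtain ⟨hv0, hv1⟩ := hv
    -- a point below v
    have hA : ∃ a : ℝ, 0 < a ∧ y₀ a < v := by
      have h1 : ∀ᶠ r in nhdsWithin (0:ℝ) (Ioi 0), y₀ r < v := hlim.eventually_lt_const hv0
      obtain ⟨a, ha1, ha2⟩ := (h1.and self_mem_nhdsWithin).exists
      exact ⟨a, ha2, ha1⟩
    -- a point above v
    have hB : ∃ b : ℝ, 0 < b ∧ v < y₀ b := by
      by_contra hB
      push_neg at hB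
      set ε := (1 - v ^ 2) / 2 with hε_def
      have hε : 0 < ε := by nlinarith
      set R := (4:ℝ) / (1 - v ^ 2) with hR_def
      have hR1 : (1:ℝ) < R := by
        rw [hR_def]
        rw [lt_div_iff₀ (by nlinarith)]
        nlinarith
      have hR0 : (0:ℝ) < R := by linarith
      have hslope : ∀ r : ℝ, R ≤ r → ε ≤ deriv y₀ r := by
        intro r hr
        have hrpos : 0 < r := lt_of_lt_of_le hR0 hr
        have hr1 : 1 ≤ r := le_trans hR1.le hr
        have hrsq : R ≤ r ^ 2 := by nlinarith
        have h2r : 2 / r ^ 2 ≤ (1 - v ^ 2) / 2 := by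
          rw [div_le_div_iff₀ (by positivity) (by norm_num)]
          have : 4 / (1 - v ^ 2) ≤ r ^ 2 := hrsq
          rw [div_le_iff₀ (by nlinarith)] at this
          nlinarith
        have hy : y₀ r ≤ v := hB r hrpos
        have hy0 : 0 ≤ y₀ r := hnn r hrpos
        have hy2 : y₀ r ^ 2 ≤ v ^ 2 := by nlinarith
        rw [hderiv r hrpos]
        have h3 : (1 + 2 / r ^ 2) * y₀ r ^ 2 ≤ (1 + (1 - v ^ 2) / 2) * v ^ 2 := by
          apply mul_le_mul (by linarith) hy2 (by positivity) (by nlinarith)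
        rw [hε_def]
        nlinarith
      -- g r = y₀ r - ε * r is monotone on [R, ∞)
      set g : ℝ → ℝ := fun r => y₀ r - ε * r with hg_def
      have hgd : ∀ r : ℝ, 0 < r →
          HasDerivAt g (deriv y₀ r - ε) r := by
        intro r hr
        have h1 : HasDerivAt y₀ (deriv y₀ r) r := by
          rw [hderiv r hr]; exact hode r hr
        have h2 : HasDerivAt (fun x : ℝ => ε * x) ε r := by
          simpa using (hasDerivAt_id r).const_mul ε
        exact h1.sub h2
      have hgmono : MonotoneOn g (Ici R) := by
        apply monotoneOn_of_deriv_nonneg (convex_Ici R)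
        · intro r hr
          exact (hgd r (lt_of_lt_of_le hR0 hr)).continuousAt.continuousWithinAt
        · rw [interior_Ici]
          intro r hr
          exact (hgd r (lt_of_lt_of_le hR0 (le_of_lt hr))).differentiableAt.differentiableWithinAt
        · rw [interior_Ici]
          intro r hr
          rw [(hgd r (lt_of_lt_of_le hR0 (le_of_lt hr))).deriv]
          linarith [hslope r (le_of_lt hr)]
      -- evaluate at a large point
      set r := R + (v + 1 - y₀ R) / ε with hr_def
      have hyR : y₀ R ≤ v := hB R hR0
      have hrR : R ≤ r := by
        rw [hr_def]
        have : 0 ≤ (v + 1 - y₀ R) / ε := div_nonneg (by linarith) hε.le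
        linarith
      have hmR : g R ≤ g r := hgmono (mem_Ici.mpr le_rfl) (mem_Ici.mpr hrR) hrR
      rw [hg_def] at hmR
      simp only at hmR
      have hεr : ε * r = ε * R + (v + 1 - y₀ R) := by
        rw [hr_def]
        field_simp
      have hrpos : 0 < r := lt_of_lt_of_le hR0 hrR
      have : v + 1 ≤ y₀ r := by nlinarith [hmR, hεr]
      linarith [hB r hrpos]
    obtain ⟨a, ha, hav⟩ := hA
    obtain ⟨b, hb, hvb⟩ := hB
    have hab : a < b := by
      rcases lt_trichotomy a b with h | h | h
      · exact h
      · exfalso; rw [h] at hav; linarith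
      · exfalso
        have := hmono (mem_Ioi.mpr hb) (mem_Ioi.mpr ha) h
        linarith
    have hIcc : Icc a b ⊆ Ioi (0:ℝ) := fun x hx => lt_of_lt_of_le ha hx.1
    have hivt := intermediate_value_Ioo (le_of_lt hab) (hcont.mono hIcc)
    obtain ⟨r, hr1, hr2⟩ := hivt (show v ∈ Ioo (y₀ a) (y₀ b) from ⟨hav, hvb⟩)
    exact ⟨r, mem_Ioi.mpr (lt_trans ha hr1.1), hr2⟩
end

section
/- Comparison with the Riccati equation: let R > 0 and let y : (0,R] → ℝ be differentiable with y(r) > 0 for all r ∈ (0,R], y(r) → 0 as r → 0⁺, and y'(r) ≥ 1 − (1 + 2/r²)·y(r)² for all r ∈ (0,R]. Then y(r) ≥ y₀(r) for all r ∈ (0,R], where y₀ is the unique nonnegative solution of y₀'(r) = 1 − (1 + 2/r²)·y₀(r)² with y₀(r) → 0 as r → 0⁺. -/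
open Set Filter

/-- Comparison with the Riccati equation: a positive function `y` on `(0, R]` vanishing at `0⁺`
and satisfying the differential inequality `y' ≥ 1 - (1 + 2/r²) y²` dominates the solution `y₀`
of the corresponding Riccati equation vanishing at `0⁺`. -/
theorem riccati_comparison (R : ℝ) (hR : 0 < R)
    (y₀ : ℝ → ℝ)
    (hode : ∀ r : ℝ, 0 < r → HasDerivAt y₀ (1 - (1 + 2 / r ^ 2) * y₀ r ^ 2) r)
    (hnn : ∀ r : ℝ, 0 < r → 0 ≤ y₀ r)
    (hlim : Tendsto y₀ (nhdsWithin 0 (Ioi 0)) (nhds 0))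
    (y y' : ℝ → ℝ)
    (hy : ∀ r ∈ Ioc (0 : ℝ) R, HasDerivAt y (y' r) r)
    (hypos : ∀ r ∈ Ioc (0 : ℝ) R, 0 < y r)
    (hylim : Tendsto y (nhdsWithin 0 (Ioi 0)) (nhds 0))
    (hineq : ∀ r ∈ Ioc (0 : ℝ) R, 1 - (1 + 2 / r ^ 2) * y r ^ 2 ≤ y' r) :
    ∀ r ∈ Ioc (0 : ℝ) R, y₀ r ≤ y r := by
  intro r₁ hr₁
  by_contra hlt
  push_neg at hlt
  set w : ℝ → ℝ := fun r => y r - y₀ r with hwdef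
  have hwr₁ : w r₁ < 0 := sub_neg.mpr hlt
  have hw' : ∀ r ∈ Ioc (0 : ℝ) R,
      HasDerivAt w (y' r - (1 - (1 + 2 / r ^ 2) * y₀ r ^ 2)) r :=
    fun r hr => (hy r hr).sub (hode r hr.1)
  have hcont : ContinuousOn w (Ioc 0 R) :=
    fun r hr => ((hw' r hr).continuousAt).continuousWithinAt
  have hwderiv : ∀ r ∈ Ioc (0 : ℝ) R, w r < 0 → 0 < deriv w r := by
    intro r hr hneg
    rw [(hw' r hr).deriv]
    have h1 := hineq r hr
    have hyy : y r < y₀ r := by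
      have : y r - y₀ r < 0 := hneg
      linarith
    have hp : (0:ℝ) < 1 + 2 / r ^ 2 := by
      have : (0:ℝ) < 2 / r ^ 2 := div_pos two_pos (pow_pos hr.1 2)
      linarith
    have hy0 := hypos r hr
    nlinarith [sq_nonneg (y r + y₀ r), mul_pos hp (mul_pos (by linarith : (0:ℝ) < y₀ r + y r) (by linarith : (0:ℝ) < y₀ r - y r))]
  by_cases hex : ∃ s ∈ Ioo (0:ℝ) r₁, 0 ≤ w s
  · obtain ⟨s, hs, hws⟩ := hex
    set A : Set ℝ := Icc s r₁ ∩ w ⁻¹' Ici 0 with hA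
    have hsub : Icc s r₁ ⊆ Ioc 0 R :=
      fun x hx => ⟨hs.1.trans_le hx.1, hx.2.trans hr₁.2⟩
    have hclosed : IsClosed A :=
      (hcont.mono hsub).preimage_isClosed_of_isClosed isClosed_Icc isClosed_Ici
    have hne : A.Nonempty := ⟨s, ⟨le_refl s, hs.2.le⟩, hws⟩
    have hbdd : BddAbove A := ⟨r₁, fun x hx => hx.1.2⟩
    set t := sSup A with ht
    have htA : t ∈ A := hclosed.csSup_mem hne hbdd
    have htr₁ : t < r₁ := lt_of_le_of_ne htA.1.2 (by
      intro h; rw [h] at htA; exact absurd htA.2 (not_le.mpr hwr₁))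
    have htpos : 0 < t := hs.1.trans_le htA.1.1
    have hneg : ∀ r ∈ Ioo t r₁, w r < 0 := by
      intro r hr
      by_contra h
      push_neg at h
      have : r ∈ A := ⟨⟨htA.1.1.trans hr.1.le, hr.2.le⟩, h⟩
      exact absurd (le_csSup hbdd this) (not_le.mpr hr.1)
    have hsub2 : Icc t r₁ ⊆ Ioc 0 R :=
      fun x hx => ⟨htpos.trans_le hx.1, hx.2.trans hr₁.2⟩
    have hmono : StrictMonoOn w (Icc t r₁) := by
      apply strictMonoOn_of_deriv_pos (convex_Icc t r₁) (hcont.mono hsub2)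
      intro x hx
      rw [interior_Icc] at hx
      exact hwderiv x (hsub2 ⟨hx.1.le, hx.2.le⟩) (hneg x hx)
    have : w t < w r₁ := hmono ⟨le_refl t, htr₁.le⟩ ⟨htr₁.le, le_refl r₁⟩ htr₁
    have : (0:ℝ) ≤ w r₁ := le_trans htA.2 this.le
    linarith
  · push_neg at hex
    have hsub : Ioc (0:ℝ) r₁ ⊆ Ioc 0 R := fun x hx => ⟨hx.1, hx.2.trans hr₁.2⟩
    have hmono : StrictMonoOn w (Ioc 0 r₁) := by
      apply strictMonoOn_of_deriv_pos (convex_Ioc 0 r₁) (hcont.mono hsub)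
      intro x hx
      rw [interior_Ioc] at hx
      exact hwderiv x (hsub ⟨hx.1, hx.2.le⟩) (hex x hx)
    have hwlim : Tendsto w (nhdsWithin 0 (Ioi 0)) (nhds 0) := by
      have := hylim.sub hlim
      simpa using this
    have hev : ∀ᶠ r in nhdsWithin (0:ℝ) (Ioi 0), w r ≤ w r₁ := by
      filter_upwards [Ioo_mem_nhdsGT_of_mem (left_mem_Ico.mpr hr₁.1)] with r hr
      exact (hmono ⟨hr.1, hr.2.le⟩ ⟨hr₁.1, le_refl r₁⟩ hr.2).le
    have : (0:ℝ) ≤ w r₁ := le_of_tendsto hwlim hev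
    linarith
end
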